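/- arXiv:1806.06100 — 5 statements merged into one kernel-verified Lean document; each statement's English description precedes it below -/
import Mathlib

section
/- Let m be a positive integer and let f : {0,1}^m → [0,1] be an arbitrary function. Sample p uniformly from [0,1], and conditioned on p sample x_1, ..., x_m independently with x_i ~ Bernoulli(p). Then E[(f(x) − p) · Σ_{i=1}^m (x_i − p) + |f(x) − (1/m) Σ_{i=1}^m x_i|] ≥ 1/12. -/
open Finset

private lemma sum_w_one (m : ℕ) (p : ℝ) :
    ∑ x : Fin m → Bool, ∏ i, (if x i then p else 1 - p) = 1 := by
  rw [← Fintype.prod_sum fun (_ : Fin m) (b : Bool) => if b then p else 1 - p]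
  have h : ∑ b : Bool, (if b then p else 1 - p) = 1 := by simp
  simp [h]

private lemma sum_w_count (m : ℕ) (p : ℝ) :
    ∑ x : Fin m → Bool, (∏ i, (if x i then p else 1 - p)) *
      (∑ i, if x i then (1 : ℝ) else 0) = m * p := by
  induction m with
  | zero => simp
  | succ n ih =>
    rw [← (Fin.consEquiv fun _ : Fin (n + 1) => Bool).sum_comp]
    rw [Fintype.sum_prod_type]
    simp only [Fin.consEquiv_apply, Fin.prod_univ_succ, Fin.sum_univ_succ,
      Fin.cons_zero, Fin.cons_succ]
    have expand : ∀ c d : ℝ, (∑ y : Fin n → Bool,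
        (c * ∏ i, (if y i then p else 1 - p)) * (d + ∑ i, (if y i then (1:ℝ) else 0)))
          = c * d + c * (n * p) := by
      intro c d
      have h1 : ∀ y : Fin n → Bool,
          (c * ∏ i, (if y i then p else 1 - p)) * (d + ∑ i, (if y i then (1:ℝ) else 0))
          = c * d * (∏ i, (if y i then p else 1 - p))
            + c * ((∏ i, (if y i then p else 1 - p)) * ∑ i, (if y i then (1:ℝ) else 0)) := by
        intro y; ring
      rw [Finset.sum_congr rfl fun y _ => h1 y, Finset.sum_add_distrib,
        ← Finset.mul_sum, ← Finset.mul_sum, sum_w_one, ih]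
      ring
    rw [Fintype.sum_bool]
    simp only [if_true, if_false]
    rw [expand, expand]
    push_cast; ring

private lemma integral_w_zero (m K : ℕ) (hK : K ≤ m) :
    ∫ p in (0:ℝ)..1, p ^ K * (1 - p) ^ (m - K) * ((K : ℝ) + 1 - ((m : ℝ) + 2) * p) = 0 := by
  have key : ∀ p : ℝ, HasDerivAt (fun q : ℝ => q ^ (K + 1) * (1 - q) ^ (m - K + 1))
      (p ^ K * (1 - p) ^ (m - K) * ((K : ℝ) + 1 - ((m : ℝ) + 2) * p)) p := by
    intro p
    have h1 : HasDerivAt (fun q : ℝ => q ^ (K + 1)) (((K : ℝ) + 1) * p ^ K) p := by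
      simpa using hasDerivAt_pow (K + 1) p
    have hid : HasDerivAt (fun q : ℝ => 1 - q) (-1) p := by
      simpa using (hasDerivAt_id p).const_sub 1
    have h2 : HasDerivAt (fun q : ℝ => (1 - q) ^ (m - K + 1))
        ((((m - K : ℕ) : ℝ) + 1) * (1 - p) ^ (m - K) * (-1)) p := by
      simpa using hid.fun_pow (m - K + 1)
    have h3 := h1.fun_mul h2
    refine h3.congr_deriv ?_
    have hmk : ((m - K : ℕ) : ℝ) = (m : ℝ) - (K : ℝ) := by
      push_cast [Nat.cast_sub hK]; ring
    rw [hmk]; ring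
  have hcont : Continuous fun p : ℝ =>
      p ^ K * (1 - p) ^ (m - K) * ((K : ℝ) + 1 - ((m : ℝ) + 2) * p) := by fun_prop
  rw [intervalIntegral.integral_eq_sub_of_hasDerivAt (fun t _ => key t)
    (hcont.intervalIntegrable 0 1)]
  simp

/-- **Fingerprinting Lemma.**  For any `f : {0,1}^m → [0,1]`, if `p` is sampled uniformly
from `[0,1]` and, given `p`, the bits `x 1, …, x m` are i.i.d. `Bernoulli(p)`, then
`E[(f(x) − p) · Σᵢ (xᵢ − p) + |f(x) − (1/m) Σᵢ xᵢ|] ≥ 1/12`. -/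
theorem fingerprinting_lemma (m : ℕ) (hm : 0 < m)
    (f : (Fin m → Bool) → ℝ) (hf : ∀ x, f x ∈ Set.Icc (0 : ℝ) 1) :
    (1 : ℝ) / 12 ≤
      ∫ p in (0 : ℝ)..1,
        ∑ x : Fin m → Bool,
          (∏ i, if x i then p else 1 - p) *
            ((f x - p) * (∑ i, ((if x i then (1 : ℝ) else 0) - p)) +
              |f x - (1 / m) * ∑ i, (if x i then (1 : ℝ) else 0)|) := by
  have hm0 : (m : ℝ) ≠ 0 := Nat.cast_ne_zero.mpr hm.ne'
  -- the number of ones in x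
  set Kn : (Fin m → Bool) → ℕ := fun x => (univ.filter fun i => x i = true).card with hKndef
  have hKle : ∀ x, Kn x ≤ m := by
    intro x
    have := Finset.card_filter_le (univ : Finset (Fin m)) fun i => x i = true
    simpa [hKndef] using this
  have hsum : ∀ x : Fin m → Bool, (∑ i, if x i then (1:ℝ) else 0) = (Kn x : ℝ) := by
    intro x; rw [Finset.sum_boole]
  have hprod : ∀ (x : Fin m → Bool) (p : ℝ),
      (∏ i, if x i then p else 1 - p) = p ^ Kn x * (1 - p) ^ (m - Kn x) := by
    intro x p
    rw [Finset.prod_ite, Finset.prod_const, Finset.prod_const]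
    congr 2
    have := Finset.card_filter_add_card_filter_not
      (s := (univ : Finset (Fin m))) (p := fun i => x i = true)
    simp only [Finset.card_univ, Fintype.card_fin] at this
    have h1 := hKle x
    simp only [hKndef]
    omega
  -- closed forms
  set J : ℝ → ℝ := fun p => ∑ x : Fin m → Bool,
      p ^ Kn x * (1 - p) ^ (m - Kn x) *
        ((f x - p) * ((Kn x : ℝ) - m * p) + |f x - (Kn x : ℝ) / m|) with hJdef
  set B : ℝ → ℝ := fun p =>
      (∑ x : Fin m → Bool,
        f x * (p ^ Kn x * (1 - p) ^ (m - Kn x) * ((Kn x : ℝ) + 1 - ((m : ℝ) + 2) * p)))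
        + p * (2 * p - 1) with hBdef
  -- the integrand equals J pointwise
  have hIeq : ∀ p : ℝ,
      (∑ x : Fin m → Bool,
        (∏ i, if x i then p else 1 - p) *
          ((f x - p) * (∑ i, ((if x i then (1 : ℝ) else 0) - p)) +
            |f x - (1 / m) * ∑ i, (if x i then (1 : ℝ) else 0)|)) = J p := by
    intro p
    rw [hJdef]
    refine Finset.sum_congr rfl fun x _ => ?_
    rw [hprod x p]
    congr 1
    have hs : (∑ i, ((if x i then (1:ℝ) else 0) - p)) = (Kn x : ℝ) - m * p := by
      rw [Finset.sum_sub_distrib, hsum x, Finset.sum_const, Finset.card_univ,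
        Fintype.card_fin, nsmul_eq_mul]
    rw [hs, hsum x]
    congr 1
    rw [one_div, inv_mul_eq_div]
  -- pointwise identities in the closed form
  have id1 : ∀ p : ℝ, ∑ x : Fin m → Bool, p ^ Kn x * (1 - p) ^ (m - Kn x) = 1 := by
    intro p
    rw [Finset.sum_congr rfl fun x _ => (hprod x p).symm]
    exact sum_w_one m p
  have id2 : ∀ p : ℝ,
      ∑ x : Fin m → Bool, p ^ Kn x * (1 - p) ^ (m - Kn x) * (Kn x : ℝ) = m * p := by
    intro p
    rw [Finset.sum_congr rfl fun x _ => by rw [← hprod x p, ← hsum x]]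
    exact sum_w_count m p
  -- pointwise lower bound  B ≤ J  on [0,1]
  have hpoint : ∀ p ∈ Set.Icc (0:ℝ) 1, B p ≤ J p := by
    intro p hp
    obtain ⟨hp0, hp1⟩ := hp
    have hP : ∀ x : Fin m → Bool, 0 ≤ p ^ Kn x * (1 - p) ^ (m - Kn x) :=
      fun x => mul_nonneg (pow_nonneg hp0 _) (pow_nonneg (by linarith) _)
    have hBeq : B p = ∑ x : Fin m → Bool, p ^ Kn x * (1 - p) ^ (m - Kn x) *
        ((f x - p) * ((Kn x : ℝ) - m * p) + (1 - 2*p) * (f x - (Kn x : ℝ)/m)) := by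
      have expand : ∀ x : Fin m → Bool,
          p ^ Kn x * (1 - p) ^ (m - Kn x) *
            ((f x - p) * ((Kn x:ℝ) - m * p) + (1 - 2*p) * (f x - (Kn x:ℝ)/m))
          = f x * (p ^ Kn x * (1 - p) ^ (m - Kn x) * ((Kn x : ℝ) + 1 - ((m:ℝ) + 2) * p))
            + ((m : ℝ) * p^2) * (p ^ Kn x * (1 - p) ^ (m - Kn x))
            + (-p - (1 - 2*p)/m) * (p ^ Kn x * (1 - p) ^ (m - Kn x) * (Kn x:ℝ)) := by
        intro x; field_simp; ring
      rw [Finset.sum_congr rfl fun x _ => expand x, Finset.sum_add_distrib,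
        Finset.sum_add_distrib, ← Finset.mul_sum, ← Finset.mul_sum, id1 p, id2 p, hBdef]
      field_simp
      ring
    rw [hBeq, hJdef]
    refine Finset.sum_le_sum fun x _ => ?_
    refine mul_le_mul_of_nonneg_left ?_ (hP x)
    refine add_le_add_right ?_ _
    set y : ℝ := f x - (Kn x : ℝ)/m with hy
    calc (1 - 2*p) * y ≤ |(1 - 2*p) * y| := le_abs_self _
      _ = |1 - 2*p| * |y| := abs_mul _ _
      _ ≤ 1 * |y| := by
          refine mul_le_mul_of_nonneg_right ?_ (abs_nonneg _)
          rw [abs_le]; constructor <;> linarith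
      _ = |y| := one_mul _
  -- continuity
  have hJcont : Continuous J := by
    rw [hJdef]
    apply continuous_finset_sum
    intro x _
    fun_prop
  have hBcont : Continuous B := by
    rw [hBdef]
    apply Continuous.add ?_ (by fun_prop)
    apply continuous_finset_sum
    intro x _
    fun_prop
  -- integral of B is 1/6
  have hBint : ∫ p in (0:ℝ)..1, B p = 1/6 := by
    have hsplit : ∫ p in (0:ℝ)..1, B p
        = (∫ p in (0:ℝ)..1, (∑ x : Fin m → Bool,
            f x * (p ^ Kn x * (1 - p) ^ (m - Kn x) * ((Kn x : ℝ) + 1 - ((m : ℝ) + 2) * p))))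
          + ∫ p in (0:ℝ)..1, p * (2 * p - 1) := by
      rw [hBdef]
      apply intervalIntegral.integral_add
      · apply Continuous.intervalIntegrable
        apply continuous_finset_sum
        intro x _
        fun_prop
      · apply Continuous.intervalIntegrable
        fun_prop
    rw [hsplit]
    have h1 : (∫ p in (0:ℝ)..1, (∑ x : Fin m → Bool,
        f x * (p ^ Kn x * (1 - p) ^ (m - Kn x) * ((Kn x : ℝ) + 1 - ((m : ℝ) + 2) * p)))) = 0 := by
      rw [intervalIntegral.integral_finset_sum]
      · refine Finset.sum_eq_zero fun x _ => ?_
        rw [intervalIntegral.integral_const_mul, integral_w_zero m (Kn x) (hKle x), mul_zero]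
      · intro x _
        apply Continuous.intervalIntegrable
        fun_prop
    have h2 : ∫ p in (0:ℝ)..1, p * (2 * p - 1) = 1/6 := by
      have h : ∀ p : ℝ, p * (2 * p - 1) = 2 * p ^ 2 - p := fun p => by ring
      simp only [h]
      rw [intervalIntegral.integral_sub
          (((by fun_prop : Continuous fun p:ℝ => 2*p^2)).intervalIntegrable 0 1)
          (((by fun_prop : Continuous fun p:ℝ => p)).intervalIntegrable 0 1),
        intervalIntegral.integral_const_mul, integral_pow, integral_id]
      norm_num
    rw [h1, h2]; norm_num
  -- put it together
  have hmono : ∫ p in (0:ℝ)..1, B p ≤ ∫ p in (0:ℝ)..1, J p :=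
    intervalIntegral.integral_mono_on (by norm_num)
      (hBcont.intervalIntegrable 0 1) (hJcont.intervalIntegrable 0 1) hpoint
  calc (1:ℝ)/12 ≤ 1/6 := by norm_num
    _ = ∫ p in (0:ℝ)..1, B p := hBint.symm
    _ ≤ ∫ p in (0:ℝ)..1, J p := hmono
    _ = _ := intervalIntegral.integral_congr fun p _ => (hIeq p).symm
end

section
/- Let N be a positive integer, let A be a proper subset of {1,...,N}, and let f : {0,1}^{({1,...,N} \ A)} → [0,1] be an arbitrary function of the coordinates outside A. Sample p uniformly from [0,1], and conditioned on p sample x_i ~ Bernoulli(p) independently for each i ∉ A. Define x̄ ∈ {0,1}^N by x̄_i = x_i for i ∉ A and x̄_i = 0 for i ∈ A. Then E[(f(x) − p) · Σ_{i ∉ A} (x_i − p)] ≥ 1/12 − E[|f(x) − (1/N) Σ_{i=1}^N x̄_i|] − |A|/(N − |A|). -/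
set_option linter.unusedSectionVars false
set_option linter.unnecessarySeqFocus false
set_option maxHeartbeats 1000000
open Finset

namespace FPAux

variable {ι : Type*} [Fintype ι] [DecidableEq ι]

noncomputable def w (p : ℝ) (b : Bool) : ℝ := if b then p else 1 - p
noncomputable def W (p : ℝ) (x : ι → Bool) : ℝ := ∏ i, w p (x i)
noncomputable def sg (b : Bool) : ℝ := if b then 1 else -1
noncomputable def ind (b : Bool) : ℝ := if b then 1 else 0

/-- Generic single-coordinate expectation lemma. -/
lemma sum_single (p : ℝ) (i : ι) (a : Bool → ℝ) :
    ∑ x : ι → Bool, a (x i) * ∏ j ∈ univ.erase i, w p (x j) = a true + a false := by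
  classical
  have h1 : ∀ x : ι → Bool,
      a (x i) * ∏ j ∈ univ.erase i, w p (x j)
        = ∏ j, (if j = i then a (x j) else w p (x j)) := by
    intro x
    rw [← Finset.mul_prod_erase univ _ (mem_univ i), if_pos rfl]
    congr 1
    exact Finset.prod_congr rfl fun j hj => (if_neg (Finset.ne_of_mem_erase hj)).symm
  simp only [h1]
  rw [← Fintype.prod_sum (fun j (b : Bool) => if j = i then a b else w p b)]
  rw [Finset.prod_eq_single i]
  · simp
  · intro j _ hj
    simp only [if_neg hj, Fintype.sum_bool, w]
    norm_num
  · simp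

lemma sum_W (p : ℝ) : ∑ x : ι → Bool, W p x = 1 := by
  simp only [W]
  rw [← Fintype.prod_sum (fun _ (b : Bool) => w p b)]
  simp [w]

lemma sum_W_ind (p : ℝ) (i : ι) : ∑ x : ι → Bool, W p x * ind (x i) = p := by
  have h : ∀ x : ι → Bool, W p x * ind (x i)
      = (w p (x i) * ind (x i)) * ∏ j ∈ univ.erase i, w p (x j) := by
    intro x
    rw [W, ← Finset.mul_prod_erase univ _ (mem_univ i)]
    ring
  simp only [h]
  rw [sum_single p i (fun b => w p b * ind b)]
  simp [w, ind]

lemma sum_sg (p : ℝ) (i : ι) :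
    ∑ x : ι → Bool, sg (x i) * ∏ j ∈ univ.erase i, w p (x j) = 0 := by
  rw [sum_single p i sg]; simp [sg]


lemma hasDerivAt_w (b : Bool) (p : ℝ) : HasDerivAt (fun q => w q b) (sg b) p := by
  cases b
  · simpa [w, sg] using (hasDerivAt_const p (1:ℝ)).fun_sub (hasDerivAt_id' (x := p))
  · simpa [w, sg] using hasDerivAt_id' (x := p)

/-- derivative of the weight product -/
lemma hasDerivAt_W (x : ι → Bool) (p : ℝ) :
    HasDerivAt (fun q => W q x)
      (∑ i, (∏ j ∈ univ.erase i, w p (x j)) * sg (x i)) p := by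
  have := HasDerivAt.fun_finsetProd (u := univ) (f := fun i q => w q (x i))
    (f' := fun i => sg (x i)) (x := p) (fun i _ => hasDerivAt_w (x i) p)
  simpa [W, smul_eq_mul] using this

lemma continuous_W (x : ι → Bool) : Continuous (fun p => W p x) := by
  unfold W
  apply continuous_finset_prod
  intro i _
  cases h : x i <;> simp [w] <;> fun_prop

/-- pointwise fingerprinting identity -/
lemma W_mul_sum (x : ι → Bool) (p : ℝ) :
    W p x * (∑ i, (ind (x i) - p))
      = p * (1 - p) * ∑ i, (∏ j ∈ univ.erase i, w p (x j)) * sg (x i) := by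
  rw [Finset.mul_sum, Finset.mul_sum]
  apply Finset.sum_congr rfl
  intro i _
  rw [W, ← Finset.mul_prod_erase univ _ (mem_univ i)]
  have : w p (x i) * (ind (x i) - p) = p * (1 - p) * sg (x i) := by
    cases h : x i <;> simp [w, ind, sg] <;> ring
  calc (w p (x i) * ∏ j ∈ univ.erase i, w p (x j)) * (ind (x i) - p)
      = (w p (x i) * (ind (x i) - p)) * ∏ j ∈ univ.erase i, w p (x j) := by ring
    _ = _ := by rw [this]; ring


section Main
variable (f : (ι → Bool) → ℝ)

noncomputable def g (p : ℝ) : ℝ := ∑ x : ι → Bool, f x * W p x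
noncomputable def Dg (p : ℝ) : ℝ :=
  ∑ x : ι → Bool, f x * ∑ i, (∏ j ∈ univ.erase i, w p (x j)) * sg (x i)

lemma continuous_erase_prod (x : ι → Bool) (i : ι) :
    Continuous (fun p => ∏ j ∈ univ.erase i, w p (x j)) := by
  apply continuous_finset_prod
  intro j _
  cases h : x j <;> simp [w, h] <;> fun_prop

lemma continuous_g : Continuous (g f) := by
  apply continuous_finset_sum
  exact fun x _ => continuous_const.mul (continuous_W x)

lemma continuous_Dg : Continuous (Dg f) := by
  apply continuous_finset_sum
  intro x _
  exact continuous_const.mul (continuous_finset_sum _ fun i _ =>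
    (continuous_erase_prod x i).mul continuous_const)

lemma hasDerivAt_g (p : ℝ) : HasDerivAt (g f) (Dg f p) p :=
  HasDerivAt.fun_sum fun x _ => (hasDerivAt_W x p).const_mul (f x)

/-- The fingerprinting integrand equals `p(1-p) g'(p)`. -/
lemma R_eq (p : ℝ) :
    ∑ x : ι → Bool, W p x * ((f x - p) * ∑ i, (ind (x i) - p))
      = p * (1 - p) * Dg f p := by
  have key : ∀ x : ι → Bool,
      W p x * ((f x - p) * ∑ i, (ind (x i) - p))
        = (f x - p) * (p * (1 - p) * ∑ i, (∏ j ∈ univ.erase i, w p (x j)) * sg (x i)) := by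
    intro x
    rw [← W_mul_sum x p]; ring
  simp only [key]
  have expand : ∀ x : ι → Bool,
      (f x - p) * (p * (1 - p) * ∑ i, (∏ j ∈ univ.erase i, w p (x j)) * sg (x i))
        = p * (1 - p) * (f x * ∑ i, (∏ j ∈ univ.erase i, w p (x j)) * sg (x i))
          - p * (p * (1 - p)) * ∑ i, (∏ j ∈ univ.erase i, w p (x j)) * sg (x i) := by
    intro x; ring
  simp only [expand]
  rw [Finset.sum_sub_distrib, ← Finset.mul_sum, ← Finset.mul_sum, ← Dg]
  have hz : ∑ x : ι → Bool, ∑ i, (∏ j ∈ univ.erase i, w p (x j)) * sg (x i) = 0 := by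
    rw [Finset.sum_comm]
    apply Finset.sum_eq_zero
    intro i _
    rw [← sum_sg p i]
    exact Finset.sum_congr rfl fun x _ => mul_comm _ _
  rw [hz, mul_zero, sub_zero]

/-- Integration by parts: `∫₀¹ p(1-p) g' = ∫₀¹ (2p-1) g`. -/
lemma integral_parts :
    ∫ p in (0:ℝ)..1, p * (1 - p) * Dg f p = ∫ p in (0:ℝ)..1, (2*p - 1) * g f p := by
  have hG : ∀ p ∈ Set.uIcc (0:ℝ) 1, HasDerivAt (fun q => q * (1 - q) * g f q)
      ((1 - 2*p) * g f p + p * (1 - p) * Dg f p) p := by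
    intro p _
    have h1 : HasDerivAt (fun q : ℝ => q * (1 - q)) (1 - 2*p) p := by
      have := (hasDerivAt_id' (x := p)).fun_mul ((hasDerivAt_const p (1:ℝ)).fun_sub (hasDerivAt_id' (x := p)))
      exact this.congr_deriv (by ring)
    exact h1.mul (hasDerivAt_g f p)
  have hint1 : IntervalIntegrable (fun p => (1 - 2*p) * g f p) MeasureTheory.volume 0 1 :=
    (Continuous.mul (by fun_prop) (continuous_g f)).intervalIntegrable _ _
  have hint2 : IntervalIntegrable (fun p => p * (1 - p) * Dg f p) MeasureTheory.volume 0 1 :=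
    (Continuous.mul (by fun_prop) (continuous_Dg f)).intervalIntegrable _ _
  have h0 : (∫ p in (0:ℝ)..1, ((1 - 2*p) * g f p + p * (1 - p) * Dg f p)) = 0 := by
    rw [intervalIntegral.integral_eq_sub_of_hasDerivAt hG (hint1.add hint2)]
    norm_num
  rw [intervalIntegral.integral_add hint1 hint2] at h0
  have : ∫ p in (0:ℝ)..1, (2*p - 1) * g f p
      = - ∫ p in (0:ℝ)..1, (1 - 2*p) * g f p := by
    rw [← intervalIntegral.integral_neg]
    congr 1; funext p; ring
  linarith

end Main


section Ineq
variable (f : (ι → Bool) → ℝ) [Nonempty ι]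

lemma W_nonneg {p : ℝ} (hp : p ∈ Set.Icc (0:ℝ) 1) (x : ι → Bool) : 0 ≤ W p x :=
  Finset.prod_nonneg fun i _ => by
    cases h : x i <;> simp [w, h] <;> [linarith [hp.2]; linarith [hp.1]]

lemma g_sub (p : ℝ) :
    g f p - p = ∑ x : ι → Bool,
      W p x * (f x - (1/(Fintype.card ι : ℝ)) * ∑ i, ind (x i)) := by
  have hm : (0:ℝ) < (Fintype.card ι : ℝ) := by
    exact_mod_cast Fintype.card_pos
  have havg : ∑ x : ι → Bool, W p x * ((1/(Fintype.card ι : ℝ)) * ∑ i, ind (x i)) = p := by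
    have : ∀ x : ι → Bool, W p x * ((1/(Fintype.card ι : ℝ)) * ∑ i, ind (x i))
        = (1/(Fintype.card ι : ℝ)) * ∑ i, W p x * ind (x i) := by
      intro x
      simp only [Finset.mul_sum]
      exact Finset.sum_congr rfl fun i _ => by ring
    simp only [this]
    rw [← Finset.mul_sum, Finset.sum_comm]
    have : ∀ i : ι, ∑ x : ι → Bool, W p x * ind (x i) = p := fun i => sum_W_ind p i
    rw [Finset.sum_congr rfl fun i _ => this i, Finset.sum_const, Finset.card_univ,
      nsmul_eq_mul]
    field_simp
  have hWf : ∑ x : ι → Bool, W p x * f x = g f p :=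
    Finset.sum_congr rfl fun x _ => mul_comm _ _
  calc g f p - p
      = ∑ x : ι → Bool, W p x * f x
        - ∑ x : ι → Bool, W p x * ((1/(Fintype.card ι : ℝ)) * ∑ i, ind (x i)) := by
        rw [hWf, havg]
    _ = _ := by
        rw [← Finset.sum_sub_distrib]
        exact Finset.sum_congr rfl fun x _ => by ring

lemma integral_sq : ∫ p in (0:ℝ)..1, (2*p - 1) * p = 1/6 := by
  have h : (fun p : ℝ => (2*p - 1) * p) = fun p : ℝ => 2*p^2 - p := funext fun p => by ring
  rw [h, intervalIntegral.integral_sub (by apply Continuous.intervalIntegrable; fun_prop)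
    (by apply Continuous.intervalIntegrable; fun_prop),
    intervalIntegral.integral_const_mul, integral_pow, integral_id]
  norm_num

/-- Generic fingerprinting lemma with constant 1/6. -/
theorem FP :
    1/6 - (∫ p in (0:ℝ)..1, ∑ x : ι → Bool,
        W p x * |f x - (1/(Fintype.card ι : ℝ)) * ∑ i, ind (x i)|)
      ≤ ∫ p in (0:ℝ)..1, ∑ x : ι → Bool,
          W p x * ((f x - p) * ∑ i, (ind (x i) - p)) := by
  set c : (ι → Bool) → ℝ := fun x => |f x - (1/(Fintype.card ι : ℝ)) * ∑ i, ind (x i)| with hc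
  have hAbsCont : Continuous (fun p => ∑ x : ι → Bool, W p x * c x) :=
    continuous_finset_sum _ fun x _ => (continuous_W x).mul continuous_const
  have hgc := continuous_g f
  have key : ∀ p ∈ Set.Icc (0:ℝ) 1,
      (2*p - 1) * p - ∑ x : ι → Bool, W p x * c x ≤ (2*p - 1) * g f p := by
    intro p hp
    have h1 : |g f p - p| ≤ ∑ x : ι → Bool, W p x * c x := by
      rw [g_sub f p]
      refine (Finset.abs_sum_le_sum_abs _ _).trans ?_
      refine Finset.sum_le_sum fun x _ => ?_
      rw [abs_mul, abs_of_nonneg (W_nonneg hp x)]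
    have h2 : |2*p - 1| ≤ 1 := abs_le.2 ⟨by linarith [hp.1], by linarith [hp.2]⟩
    have h3 : |(2*p - 1) * (g f p - p)| ≤ ∑ x : ι → Bool, W p x * c x := by
      rw [abs_mul]
      calc |2*p - 1| * |g f p - p| ≤ 1 * |g f p - p| := by
            apply mul_le_mul_of_nonneg_right h2 (abs_nonneg _)
        _ = |g f p - p| := one_mul _
        _ ≤ _ := h1
    have h4 := neg_abs_le ((2*p - 1) * (g f p - p))
    nlinarith [h3, h4]
  have hint1 : IntervalIntegrable (fun p => (2*p-1)*p - ∑ x : ι → Bool, W p x * c x)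
      MeasureTheory.volume 0 1 :=
    (Continuous.sub (by fun_prop) hAbsCont).intervalIntegrable _ _
  have hint2 : IntervalIntegrable (fun p => (2*p - 1) * g f p) MeasureTheory.volume 0 1 :=
    ((by fun_prop : Continuous fun p : ℝ => 2*p-1).mul hgc).intervalIntegrable _ _
  have hmono := intervalIntegral.integral_mono_on (le_refl (0:ℝ) |>.trans zero_le_one)
    hint1 hint2 key
  rw [intervalIntegral.integral_sub (by apply Continuous.intervalIntegrable; fun_prop)
    (hAbsCont.intervalIntegrable _ _), integral_sq] at hmono
  have hR : (∫ p in (0:ℝ)..1, ∑ x : ι → Bool, W p x * ((f x - p) * ∑ i, (ind (x i) - p)))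
      = ∫ p in (0:ℝ)..1, (2*p - 1) * g f p := by
    rw [intervalIntegral.integral_congr (g := fun p => p * (1-p) * Dg f p)
      (fun p _ => R_eq f p), integral_parts]
  rw [hR]
  exact hmono

end Ineq
end FPAux


open FPAux



/-- Per-round consequence of the Fingerprinting Lemma.  Let `A ⊊ [N]`, and let `f` be a
`[0,1]`-valued function of the coordinates outside `A`.  Sample `p` uniformly from `[0,1]`
and, given `p`, sample `x i ~ Bernoulli(p)` i.i.d. for `i ∉ A`.  Let `x̄ ∈ {0,1}^N` agree
with `x` outside `A` and be `0` on `A`.  Then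
`E[(f(x) − p) · Σ_{i ∉ A} (xᵢ − p)] ≥ 1/12 − E[|f(x) − (1/N) Σᵢ x̄ᵢ|] − |A|/(N − |A|)`. -/
theorem fingerprinting_with_accused (N : ℕ) (hN : 0 < N)
    (A : Finset (Fin N)) (hA : A ⊂ Finset.univ)
    (f : ({i : Fin N // i ∉ A} → Bool) → ℝ)
    (hf : ∀ x, f x ∈ Set.Icc (0 : ℝ) 1) :
    (1 : ℝ) / 12
      - (∫ p in (0 : ℝ)..1,
          ∑ x : {i : Fin N // i ∉ A} → Bool,
            (∏ i, if x i then p else 1 - p) *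
              |f x - (1 / N) * ∑ i : Fin N,
                (if h : i ∈ A then 0 else (if x ⟨i, h⟩ then (1 : ℝ) else 0))|)
      - (A.card : ℝ) / ((N : ℝ) - A.card)
    ≤ ∫ p in (0 : ℝ)..1,
        ∑ x : {i : Fin N // i ∉ A} → Bool,
          (∏ i, if x i then p else 1 - p) *
            ((f x - p) * ∑ i : {i : Fin N // i ∉ A}, ((if x i then (1 : ℝ) else 0) - p)) := by
  classical
  have hAN : A.card < N := by
    have := Finset.card_lt_card hA
    simpa using this
  have hcard : Fintype.card {i : Fin N // i ∉ A} = N - A.card := by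
    rw [Fintype.card_subtype_compl, Fintype.card_fin, Fintype.card_coe]
  haveI : Nonempty {i : Fin N // i ∉ A} := by
    rw [← Fintype.card_pos_iff, hcard]; omega
  -- real-number facts
  have hmr : ((Fintype.card {i : Fin N // i ∉ A} : ℕ) : ℝ) = (N : ℝ) - A.card := by
    rw [hcard]; push_cast [Nat.cast_sub hAN.le]; ring
  set r : ℝ := ((Fintype.card {i : Fin N // i ∉ A} : ℕ) : ℝ) with hrdef
  have hr0 : 0 < r := by
    rw [hmr]
    have : (A.card:ℝ) < N := by exact_mod_cast hAN
    linarith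
  have hn0 : (0:ℝ) < N := by exact_mod_cast hN
  have hrn : r ≤ (N:ℝ) := by rw [hmr]; have : (0:ℝ) ≤ A.card := Nat.cast_nonneg _; linarith
  set κ : ℝ := (A.card : ℝ) / ((N : ℝ) - A.card) with hκdef
  have hκr : κ = ((N:ℝ) - r) / r := by rw [hκdef, hmr]; ring_nf
  -- rewrite the dite sum
  have hdite : ∀ x : {i : Fin N // i ∉ A} → Bool,
      (∑ i : Fin N, if h : i ∈ A then (0:ℝ) else (if x ⟨i, h⟩ then (1 : ℝ) else 0))
        = ∑ i : {i : Fin N // i ∉ A}, ind (x i) := by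
    intro x
    have h1 : ∀ i ∈ (Finset.univ : Finset (Fin N)), i ∉ Aᶜ →
        (if h : i ∈ A then (0:ℝ) else (if x ⟨i, h⟩ then (1 : ℝ) else 0)) = 0 := by
      intro i _ hi
      rw [dif_pos (by simpa using hi)]
    rw [← Finset.sum_subset (Finset.subset_univ Aᶜ) h1,
      Finset.sum_subtype Aᶜ (fun i => Finset.mem_compl)
        (fun i => if h : i ∈ A then (0:ℝ) else (if x ⟨i, h⟩ then (1 : ℝ) else 0))]
    refine Finset.sum_congr rfl fun i _ => ?_
    rw [dif_neg i.2]
    rfl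
  -- pointwise comparison of the two absolute deviations
  have hpoint : ∀ x : {i : Fin N // i ∉ A} → Bool,
      |f x - (1/r) * ∑ i, ind (x i)|
        ≤ |f x - (1 / N) * ∑ i : Fin N,
            (if h : i ∈ A then 0 else (if x ⟨i, h⟩ then (1 : ℝ) else 0))| + κ := by
    intro x
    rw [hdite x]
    set S : ℝ := ∑ i, ind (x i) with hSdef
    have hS0 : 0 ≤ S := Finset.sum_nonneg fun i _ => by cases h : x i <;> simp [ind, h]
    have hSr : S ≤ r := by
      have := Finset.sum_le_card_nsmul Finset.univ (fun i => ind (x i)) 1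
        (fun i _ => by cases h : x i <;> simp [ind, h])
      simpa [Finset.card_univ, nsmul_eq_mul, hrdef] using this
    have tri : |f x - (1/r) * S| ≤ |f x - (1/N) * S| + |(1/N) * S - (1/r) * S| :=
      abs_sub_le _ _ _
    have habs : |(1/N) * S - (1/r) * S| = (1/r) * S - (1/N) * S := by
      rw [abs_sub_comm, abs_of_nonneg]
      have h1 : 1/(N:ℝ) ≤ 1/r := by
        apply one_div_le_one_div_of_le hr0 hrn
      nlinarith
    have hend : (1/r) * S - (1/N) * S ≤ κ := by
      rw [hκr]
      have he : (1/r) * S - (1/(N:ℝ)) * S = S*((N:ℝ)-r)/(r*(N:ℝ)) := by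
        field_simp
      rw [he, div_le_div_iff₀ (by positivity) hr0]
      have h1 := mul_le_mul_of_nonneg_right
        (mul_le_mul_of_nonneg_right hSr (sub_nonneg.mpr hrn)) hr0.le
      have h2 := mul_le_mul_of_nonneg_left hrn
        (mul_nonneg (sub_nonneg.mpr hrn) hr0.le)
      nlinarith [h1, h2]
    linarith
  -- continuity of the two deviation integrands
  have hAbsMcont : Continuous (fun p => ∑ x : {i : Fin N // i ∉ A} → Bool,
      W p x * |f x - (1/r) * ∑ i, ind (x i)|) :=
    continuous_finset_sum _ fun x _ => (continuous_W x).mul continuous_const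
  have hAbsNcont : Continuous (fun p => ∑ x : {i : Fin N // i ∉ A} → Bool,
      W p x * |f x - (1 / N) * ∑ i : Fin N,
        (if h : i ∈ A then 0 else (if x ⟨i, h⟩ then (1 : ℝ) else 0))|) :=
    continuous_finset_sum _ fun x _ => (continuous_W x).mul continuous_const
  -- pointwise integrand inequality
  have hmono : ∀ p ∈ Set.Icc (0:ℝ) 1,
      (∑ x : {i : Fin N // i ∉ A} → Bool, W p x * |f x - (1/r) * ∑ i, ind (x i)|)
        ≤ (∑ x : {i : Fin N // i ∉ A} → Bool,
            W p x * |f x - (1 / N) * ∑ i : Fin N,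
              (if h : i ∈ A then 0 else (if x ⟨i, h⟩ then (1 : ℝ) else 0))|) + κ := by
    intro p hp
    have h1 : (∑ x : {i : Fin N // i ∉ A} → Bool, W p x * |f x - (1/r) * ∑ i, ind (x i)|)
        ≤ ∑ x : {i : Fin N // i ∉ A} → Bool,
            W p x * (|f x - (1 / N) * ∑ i : Fin N,
              (if h : i ∈ A then 0 else (if x ⟨i, h⟩ then (1 : ℝ) else 0))| + κ) :=
      Finset.sum_le_sum fun x _ => mul_le_mul_of_nonneg_left (hpoint x) (W_nonneg hp x)
    have h2 : (∑ x : {i : Fin N // i ∉ A} → Bool,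
            W p x * (|f x - (1 / N) * ∑ i : Fin N,
              (if h : i ∈ A then 0 else (if x ⟨i, h⟩ then (1 : ℝ) else 0))| + κ))
        = (∑ x : {i : Fin N // i ∉ A} → Bool,
            W p x * |f x - (1 / N) * ∑ i : Fin N,
              (if h : i ∈ A then 0 else (if x ⟨i, h⟩ then (1 : ℝ) else 0))|) + κ := by
      simp only [mul_add]
      rw [Finset.sum_add_distrib, ← Finset.sum_mul, sum_W, one_mul]
    linarith
  -- integrate the pointwise inequality
  have hIntIneq : (∫ p in (0:ℝ)..1, ∑ x : {i : Fin N // i ∉ A} → Bool,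
        W p x * |f x - (1/r) * ∑ i, ind (x i)|)
      ≤ (∫ p in (0:ℝ)..1, ∑ x : {i : Fin N // i ∉ A} → Bool,
          W p x * |f x - (1 / N) * ∑ i : Fin N,
            (if h : i ∈ A then 0 else (if x ⟨i, h⟩ then (1 : ℝ) else 0))|) + κ := by
    have hstep := intervalIntegral.integral_mono_on (μ := MeasureTheory.volume) zero_le_one
      (hAbsMcont.intervalIntegrable _ _)
      ((hAbsNcont.add continuous_const).intervalIntegrable _ _) hmono
    simp only [Pi.add_apply] at hstep
    rw [intervalIntegral.integral_add (hAbsNcont.intervalIntegrable _ _)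
      (intervalIntegrable_const :
        IntervalIntegrable (fun _ => κ) MeasureTheory.volume 0 1),
      intervalIntegral.integral_const] at hstep
    simpa using hstep
  have hFP := FP f
  rw [show (1:ℝ)/(Fintype.card {i : Fin N // i ∉ A} : ℝ) = 1/r from rfl] at hFP
  show (1 : ℝ) / 12
      - (∫ p in (0 : ℝ)..1,
          ∑ x : {i : Fin N // i ∉ A} → Bool,
            W p x *
              |f x - (1 / N) * ∑ i : Fin N,
                (if h : i ∈ A then 0 else (if x ⟨i, h⟩ then (1 : ℝ) else 0))|)
      - κ
    ≤ ∫ p in (0 : ℝ)..1,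
        ∑ x : {i : Fin N // i ∉ A} → Bool,
          W p x * ((f x - p) * ∑ i : {i : Fin N // i ∉ A}, (ind (x i) - p))
  linarith [hFP, hIntIneq]
end

section
/- Let k ≥ 4 be an integer and let ℓ = ⌊(k/8) log₂ k⌋. Let W be a random variable taking values in an arbitrary measurable space, let R be uniformly distributed on {0, 1, ..., k!−1} and independent of W, let s = R mod 2^ℓ, and let U be uniformly distributed on {0, 1, ..., 2^ℓ−1} and independent of W. Then the total variation distance between the joint distributions of (W, s) and (W, U) is at most k^{−k/8}. -/
open MeasureTheory ProbabilityTheory Nat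


lemma count_lower (N n u : ℕ) (hn : 0 < n) (hu : u < n) :
    N / n ≤ ((Finset.range N).filter (fun r => r % n = u)).card := by
  classical
  have : ((Finset.range (N / n)).image (fun q => q * n + u)) ⊆
      (Finset.range N).filter (fun r => r % n = u) := by
    intro x hx
    simp only [Finset.mem_image, Finset.mem_range] at hx
    obtain ⟨q, hq, rfl⟩ := hx
    simp only [Finset.mem_filter, Finset.mem_range]
    constructor
    · have h1 : (q + 1) * n ≤ (N / n) * n := Nat.mul_le_mul_right n hq
      have h2 : (N / n) * n ≤ N := Nat.div_mul_le_self N n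
      calc q * n + u < q * n + n := by omega
        _ = (q + 1) * n := by ring
        _ ≤ N := le_trans h1 h2
    · rw [Nat.add_comm, Nat.add_mul_mod_self_right, Nat.mod_eq_of_lt hu]
  calc N / n = ((Finset.range (N / n)).image (fun q => q * n + u)).card := by
        rw [Finset.card_image_of_injective _ (fun a b hab => by
          simpa using Nat.eq_of_mul_eq_mul_right hn (by omega : a * n = b * n))]
        simp
    _ ≤ _ := Finset.card_le_card this

lemma count_upper (N n u : ℕ) :
    ((Finset.range N).filter (fun r => r % n = u)).card ≤ N / n + 1 := by
  classical
  have := Finset.card_le_card_of_injOn (f := fun r => r / n)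
    (s := (Finset.range N).filter (fun r => r % n = u))
    (t := Finset.range (N / n + 1))
    (by
      intro r hr
      simp only [Finset.mem_coe, Finset.mem_filter, Finset.mem_range] at hr ⊢
      have : r / n ≤ N / n := Nat.div_le_div_right (le_of_lt hr.1)
      omega)
    (by
      intro a ha b hb hab
      simp only [Finset.mem_coe, Finset.mem_filter, Finset.mem_range] at ha hb
      have hab' : a / n = b / n := hab
      have ha2 := Nat.div_add_mod a n
      have hb2 := Nat.div_add_mod b n
      have h3 := ha.2
      have h4 := hb.2
      rw [← ha2, ← hb2, h3, h4, hab'])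
  simpa using this

lemma pow_half_le_factorial (k : ℕ) : (k / 2 + 1) ^ (k - k / 2) ≤ k ! := by
  have h := Nat.factorial_mul_ascFactorial (k / 2) (k - k / 2)
  have h2 : k / 2 + (k - k / 2) = k := by omega
  rw [h2] at h
  calc (k / 2 + 1) ^ (k - k / 2) ≤ (k / 2 + 1).ascFactorial (k - k / 2) :=
        Nat.pow_succ_le_ascFactorial _ _
    _ ≤ (k / 2) ! * (k / 2 + 1).ascFactorial (k - k / 2) :=
        Nat.le_mul_of_pos_left _ (Nat.factorial_pos _)
    _ = k ! := h

lemma two_pow_le_rpow (k ℓ : ℕ) (hk : 4 ≤ k)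
    (hle : (ℓ : ℝ) ≤ (k / 8 : ℝ) * Real.logb 2 k) :
    ((2 : ℝ) ^ ℓ) ≤ (k : ℝ) ^ ((k : ℝ) / 8) := by
  have hk0 : (0 : ℝ) < k := by
    have : (4:ℝ) ≤ k := by exact_mod_cast hk
    linarith
  have h1 : (2 : ℝ) ^ (ℓ : ℝ) ≤ (2 : ℝ) ^ ((k / 8 : ℝ) * Real.logb 2 k) :=
    Real.rpow_le_rpow_of_exponent_le one_le_two hle
  have h2 : (2 : ℝ) ^ ((k / 8 : ℝ) * Real.logb 2 k)
      = ((2 : ℝ) ^ Real.logb 2 (k : ℝ)) ^ ((k : ℝ) / 8) := by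
    rw [← Real.rpow_mul (by norm_num), mul_comm]
  rw [Real.rpow_logb two_pos (by norm_num) hk0] at h2
  calc (2 : ℝ) ^ ℓ = (2 : ℝ) ^ (ℓ : ℝ) := (Real.rpow_natCast 2 ℓ).symm
    _ ≤ _ := h1.trans_eq h2

lemma rpow_quarter_le_factorial (k : ℕ) (hk : 4 ≤ k) :
    (k : ℝ) ^ ((k : ℝ) / 4) ≤ (k ! : ℝ) := by
  have hk0 : (0 : ℝ) < k := by
    have : (4:ℝ) ≤ k := by exact_mod_cast hk
    linarith
  set m := k / 2 with hm
  have hnat : ((m + 1 : ℕ) : ℝ) ^ ((k - m : ℕ)) ≤ (k ! : ℝ) := by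
    exact_mod_cast pow_half_le_factorial k
  have step1 : (k : ℝ) ^ ((k : ℝ) / 4) = ((k : ℝ) ^ ((1 : ℝ) / 2)) ^ ((k : ℝ) / 2) := by
    rw [← Real.rpow_mul hk0.le]
    ring_nf
  have hsqrt : (k : ℝ) ^ ((1 : ℝ) / 2) ≤ (k : ℝ) / 2 := by
    rw [← Real.sqrt_eq_rpow]
    have h4 : (k : ℝ) ≤ ((k : ℝ) / 2) ^ 2 := by
      have : (4:ℝ) ≤ k := by exact_mod_cast hk
      nlinarith
    calc Real.sqrt k ≤ Real.sqrt (((k : ℝ) / 2) ^ 2) := Real.sqrt_le_sqrt h4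
      _ = (k : ℝ) / 2 := Real.sqrt_sq (by linarith)
  have step2 : ((k : ℝ) ^ ((1 : ℝ) / 2)) ^ ((k : ℝ) / 2) ≤ ((k : ℝ) / 2) ^ ((k : ℝ) / 2) :=
    Real.rpow_le_rpow (Real.rpow_nonneg hk0.le _) hsqrt (by linarith)
  have hm1 : (k : ℝ) / 2 ≤ ((m + 1 : ℕ) : ℝ) := by
    have : k ≤ 2 * (m + 1) := by omega
    have := (Nat.cast_le (α := ℝ)).2 this
    push_cast at this ⊢
    linarith
  have step3 : ((k : ℝ) / 2) ^ ((k : ℝ) / 2) ≤ ((m + 1 : ℕ) : ℝ) ^ ((k : ℝ) / 2) :=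
    Real.rpow_le_rpow (by linarith) hm1 (by linarith)
  have hbase1 : (1 : ℝ) ≤ ((m + 1 : ℕ) : ℝ) := by
    have : (1 : ℕ) ≤ m + 1 := by omega
    exact_mod_cast this
  have hexp : (k : ℝ) / 2 ≤ ((k - m : ℕ) : ℝ) := by
    have h2 : k ≤ 2 * (k - m) := by omega
    have := (Nat.cast_le (α := ℝ)).2 h2
    push_cast at this ⊢
    linarith
  have step4 : ((m + 1 : ℕ) : ℝ) ^ ((k : ℝ) / 2) ≤ ((m + 1 : ℕ) : ℝ) ^ (((k - m : ℕ) : ℝ)) :=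
    Real.rpow_le_rpow_of_exponent_le hbase1 hexp
  calc (k : ℝ) ^ ((k : ℝ) / 4) = ((k : ℝ) ^ ((1 : ℝ) / 2)) ^ ((k : ℝ) / 2) := step1
    _ ≤ ((k : ℝ) / 2) ^ ((k : ℝ) / 2) := step2
    _ ≤ ((m + 1 : ℕ) : ℝ) ^ ((k : ℝ) / 2) := step3
    _ ≤ ((m + 1 : ℕ) : ℝ) ^ (((k - m : ℕ) : ℝ)) := step4
    _ = ((m + 1 : ℕ) : ℝ) ^ ((k - m : ℕ)) := Real.rpow_natCast _ _
    _ ≤ (k ! : ℝ) := hnat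

lemma final_bound (k ℓ : ℕ) (hk : 4 ≤ k)
    (hle : (ℓ : ℝ) ≤ (k / 8 : ℝ) * Real.logb 2 k) :
    ((2 ^ ℓ : ℕ) : ℝ) / ((k ! : ℕ) : ℝ) ≤ (k : ℝ) ^ (-(k : ℝ) / 8) := by
  have hk0 : (0 : ℝ) < k := by
    have : (4:ℝ) ≤ k := by exact_mod_cast hk
    linarith
  have hN : (0 : ℝ) < (k ! : ℝ) := by exact_mod_cast k.factorial_pos
  have h1 : ((2 ^ ℓ : ℕ) : ℝ) ≤ (k : ℝ) ^ ((k : ℝ) / 8) := by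
    push_cast
    exact two_pow_le_rpow k ℓ hk hle
  have h2 : (k : ℝ) ^ ((k : ℝ) / 8) * (k : ℝ) ^ ((k : ℝ) / 8) = (k : ℝ) ^ ((k : ℝ) / 4) := by
    rw [← Real.rpow_add hk0]
    ring_nf
  have hpos8 : (0 : ℝ) < (k : ℝ) ^ ((k : ℝ) / 8) := Real.rpow_pos_of_pos hk0 _
  have h3 : ((2 ^ ℓ : ℕ) : ℝ) * (k : ℝ) ^ ((k : ℝ) / 8) ≤ (k ! : ℝ) := by
    calc ((2 ^ ℓ : ℕ) : ℝ) * (k : ℝ) ^ ((k : ℝ) / 8)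
        ≤ (k : ℝ) ^ ((k : ℝ) / 8) * (k : ℝ) ^ ((k : ℝ) / 8) := by
          apply mul_le_mul_of_nonneg_right h1 hpos8.le
      _ = (k : ℝ) ^ ((k : ℝ) / 4) := h2
      _ ≤ (k ! : ℝ) := rpow_quarter_le_factorial k hk
  have hneg : (k : ℝ) ^ (-(k : ℝ) / 8) = ((k : ℝ) ^ ((k : ℝ) / 8))⁻¹ := by
    rw [← Real.rpow_neg hk0.le]
    ring_nf
  rw [hneg, div_le_iff₀ hN, inv_mul_eq_div, le_div_iff₀ hpos8]
  linarith [h3]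

lemma joint_split {Ω W : Type*} [MeasurableSpace Ω] [MeasurableSpace W]
    (μ : Measure Ω) (Wf : Ω → W) (X : Ω → ℕ)
    (hW : Measurable Wf) (hX : Measurable X) (hind : IndepFun Wf X μ)
    (n : ℕ) (hXlt : ∀ᵐ ω ∂μ, X ω < n)
    (E : Set (W × ℕ)) (hE : MeasurableSet E) :
    μ {ω | (Wf ω, X ω) ∈ E}
      = ∑ u ∈ Finset.range n, μ (Wf ⁻¹' {w | (w, u) ∈ E}) * μ (X ⁻¹' {u}) := by
  have hsec : ∀ u : ℕ, MeasurableSet {w | (w, u) ∈ E} := fun u =>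
    measurable_prodMk_right hE
  have hae : {ω | (Wf ω, X ω) ∈ E}
      =ᵐ[μ] ⋃ u ∈ Finset.range n, (Wf ⁻¹' {w | (w, u) ∈ E} ∩ X ⁻¹' {u}) := by
    filter_upwards [hXlt] with ω hω
    show ((Wf ω, X ω) ∈ E) = (ω ∈ ⋃ u ∈ Finset.range n, (Wf ⁻¹' {w | (w, u) ∈ E} ∩ X ⁻¹' {u}))
    rw [eq_iff_iff]
    simp only [Set.mem_setOf_eq, Set.mem_iUnion, Set.mem_inter_iff, Set.mem_preimage,
      Set.mem_singleton_iff, Finset.mem_range]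
    constructor
    · intro h; exact ⟨X ω, hω, h, rfl⟩
    · rintro ⟨u, _, h, rfl⟩; exact h
  have hdisj : Set.PairwiseDisjoint (↑(Finset.range n))
      (fun u => Wf ⁻¹' {w | (w, u) ∈ E} ∩ X ⁻¹' {u}) := by
    intro a _ b _ hab
    apply Set.disjoint_left.mpr
    rintro ω ⟨_, ha⟩ ⟨_, hb⟩
    exact hab (ha.symm.trans hb)
  have hmeas : ∀ u ∈ Finset.range n,
      MeasurableSet (Wf ⁻¹' {w | (w, u) ∈ E} ∩ X ⁻¹' {u}) := fun u _ =>
    (hW (hsec u)).inter (hX (measurableSet_singleton u))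
  rw [measure_congr hae, measure_biUnion_finset hdisj hmeas]
  exact Finset.sum_congr rfl fun u _ =>
    hind.measure_inter_preimage_eq_mul _ _ (hsec u) (measurableSet_singleton u)

lemma uniform_ae_lt {Ω : Type*} [MeasurableSpace Ω] (μ : Measure Ω) [IsProbabilityMeasure μ]
    (X : Ω → ℕ) (hX : Measurable X) (N : ℕ) (hN : N ≠ 0)
    (hunif : ∀ r < N, μ {ω | X ω = r} = ((N : ENNReal))⁻¹) :
    ∀ᵐ ω ∂μ, X ω < N := by
  have hset : {ω | X ω < N} = ⋃ r ∈ Finset.range N, X ⁻¹' {r} := by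
    ext ω
    simp [Set.mem_iUnion, Finset.mem_range, eq_comm]
  have hdisj : Set.PairwiseDisjoint (↑(Finset.range N)) (fun r => X ⁻¹' {r}) := by
    intro a _ b _ hab
    apply Set.disjoint_left.mpr
    rintro ω ha hb
    exact hab ((Set.mem_singleton_iff.1 ha).symm.trans (Set.mem_singleton_iff.1 hb))
  have h1 : μ {ω | X ω < N} = 1 := by
    rw [hset, measure_biUnion_finset hdisj (fun r _ => hX (measurableSet_singleton r))]
    have : ∀ r ∈ Finset.range N, μ (X ⁻¹' {r}) = ((N : ENNReal))⁻¹ := by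
      intro r hr
      exact hunif r (Finset.mem_range.1 hr)
    rw [Finset.sum_congr rfl this, Finset.sum_const, Finset.card_range, nsmul_eq_mul]
    exact ENNReal.mul_inv_cancel (by exact_mod_cast hN) (ENNReal.natCast_ne_top N)
  have hms : MeasurableSet {ω | X ω < N} := hX measurableSet_Iio
  have hc : μ {ω | X ω < N}ᶜ = 0 := by
    rw [measure_compl hms (measure_ne_top μ _), h1, measure_univ, tsub_self]
  rw [ae_iff]
  exact hc

lemma mod_dist {Ω : Type*} [MeasurableSpace Ω] (μ : Measure Ω) [IsProbabilityMeasure μ]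
    (R : Ω → ℕ) (hR : Measurable R) (N n : ℕ) (hN : N ≠ 0)
    (hRunif : ∀ r < N, μ {ω | R ω = r} = ((N : ENNReal))⁻¹) (u : ℕ) :
    μ ((fun ω => R ω % n) ⁻¹' {u}) =
      (((Finset.range N).filter (fun r => r % n = u)).card : ENNReal) * (N : ENNReal)⁻¹ := by
  have haeR := uniform_ae_lt μ R hR N hN hRunif
  have hae : ((fun ω => R ω % n) ⁻¹' {u})
      =ᵐ[μ] ⋃ r ∈ (Finset.range N).filter (fun r => r % n = u), R ⁻¹' {r} := by
    filter_upwards [haeR] with ω hω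
    show (R ω % n ∈ ({u} : Set ℕ))
      = (ω ∈ ⋃ r ∈ (Finset.range N).filter (fun r => r % n = u), R ⁻¹' {r})
    rw [eq_iff_iff]
    simp only [Set.mem_singleton_iff, Set.mem_iUnion, Set.mem_preimage, Finset.mem_filter,
      Finset.mem_range]
    constructor
    · intro h; exact ⟨R ω, ⟨hω, h⟩, rfl⟩
    · rintro ⟨r, ⟨_, h⟩, rfl⟩; exact h
  have hdisj : Set.PairwiseDisjoint
      (↑((Finset.range N).filter (fun r => r % n = u))) (fun r => R ⁻¹' {r}) := by
    intro a _ b _ hab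
    apply Set.disjoint_left.mpr
    rintro ω ha hb
    exact hab ((Set.mem_singleton_iff.1 ha).symm.trans (Set.mem_singleton_iff.1 hb))
  rw [measure_congr hae,
    measure_biUnion_finset hdisj (fun r _ => hR (measurableSet_singleton r))]
  have heach : ∀ r ∈ (Finset.range N).filter (fun r => r % n = u),
      μ (R ⁻¹' {r}) = ((N : ENNReal))⁻¹ := by
    intro r hr
    exact hRunif r (Finset.mem_range.1 (Finset.mem_filter.1 hr).1)
  rw [Finset.sum_congr rfl heach, Finset.sum_const, nsmul_eq_mul]


/-- The `ℓ = ⌊(k/8) log₂ k⌋` least significant bits of a uniform element of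
`{0, …, k!−1}`, together with any independent side information `W`, are within total
variation distance `k^{−k/8}` of `(W, uniform)`.  Total variation distance is expressed in
its equivalent form as the supremum over measurable events of the difference of
probabilities. -/
theorem joint_lsb_close_to_uniform
    {Ω W : Type*} [MeasurableSpace Ω] [MeasurableSpace W]
    (μ : Measure Ω) [IsProbabilityMeasure μ]
    (k ℓ : ℕ) (hk : 4 ≤ k) (hℓ : (ℓ : ℤ) = ⌊(k / 8 : ℝ) * Real.logb 2 k⌋)
    (Wf : Ω → W) (R U : Ω → ℕ)
    (hW : Measurable Wf) (hR : Measurable R) (hU : Measurable U)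
    (hRunif : ∀ r < k !, μ {ω | R ω = r} = ((k ! : ENNReal))⁻¹)
    (hUunif : ∀ u < 2 ^ ℓ, μ {ω | U ω = u} = ((2 ^ ℓ : ENNReal))⁻¹)
    (hindR : IndepFun Wf R μ) (hindU : IndepFun Wf U μ) :
    ∀ E : Set (W × ℕ), MeasurableSet E →
      |(μ {ω | (Wf ω, R ω % 2 ^ ℓ) ∈ E}).toReal - (μ {ω | (Wf ω, U ω) ∈ E}).toReal|
        ≤ (k : ℝ) ^ (-(k : ℝ) / 8) := by
  intro E hE
  -- notation
  have hle : (ℓ : ℝ) ≤ ((k : ℝ) / 8) * Real.logb 2 k := by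
    have h := Int.floor_le (((k : ℝ) / 8) * Real.logb 2 (k : ℝ))
    rw [← hℓ] at h
    exact_mod_cast h
  set n := 2 ^ ℓ with hn
  set N := k ! with hNdef
  have hnpos : 0 < n := Nat.pow_pos (by norm_num)
  have hNpos : 0 < N := Nat.factorial_pos k
  have hUunif' : ∀ u < n, μ {ω | U ω = u} = ((n : ENNReal))⁻¹ := by
    intro u hu
    rw [hUunif u hu]
    norm_cast
  have hRunif' : ∀ r < N, μ {ω | R ω = r} = ((N : ENNReal))⁻¹ := hRunif
  -- measurability of R % n
  have hmodmeas : Measurable (fun r : ℕ => r % n) := measurable_from_top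
  have hRmod : Measurable (fun ω => R ω % n) := hmodmeas.comp hR
  have hindRmod : IndepFun Wf (fun ω => R ω % n) μ :=
    hindR.comp measurable_id hmodmeas
  have hRmodae : ∀ᵐ ω ∂μ, R ω % n < n := ae_of_all _ (fun ω => Nat.mod_lt _ hnpos)
  have hUae : ∀ᵐ ω ∂μ, U ω < n := uniform_ae_lt μ U hU n hnpos.ne' hUunif'
  -- splitting
  have hsplitR : μ {ω | (Wf ω, R ω % n) ∈ E}
      = ∑ u ∈ Finset.range n, μ (Wf ⁻¹' {w | (w, u) ∈ E})
          * μ ((fun ω => R ω % n) ⁻¹' {u}) :=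
    joint_split μ Wf (fun ω => R ω % n) hW hRmod hindRmod n hRmodae E hE
  have hsplitU : μ {ω | (Wf ω, U ω) ∈ E}
      = ∑ u ∈ Finset.range n, μ (Wf ⁻¹' {w | (w, u) ∈ E}) * μ (U ⁻¹' {u}) :=
    joint_split μ Wf U hW hU hindU n hUae E hE
  -- distributions
  set cR : ℕ → ℕ := fun u => ((Finset.range N).filter (fun r => r % n = u)).card with hcR
  have hdistR : ∀ u, μ ((fun ω => R ω % n) ⁻¹' {u})
      = (cR u : ENNReal) * (N : ENNReal)⁻¹ :=
    fun u => mod_dist μ R hR N n hNpos.ne' hRunif' u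
  have hdistU : ∀ u < n, μ (U ⁻¹' {u}) = ((n : ENNReal))⁻¹ := fun u hu => hUunif' u hu
  -- to real sums
  set a : ℕ → ℝ := fun u => (μ (Wf ⁻¹' {w | (w, u) ∈ E})).toReal with ha
  have ha0 : ∀ u, 0 ≤ a u := fun u => ENNReal.toReal_nonneg
  have ha1 : ∀ u, a u ≤ 1 := by
    intro u
    have := prob_le_one (μ := μ) (s := Wf ⁻¹' {w | (w, u) ∈ E})
    calc a u ≤ (1 : ENNReal).toReal := ENNReal.toReal_mono ENNReal.one_ne_top this
      _ = 1 := by simp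
  have htR : (μ {ω | (Wf ω, R ω % n) ∈ E}).toReal
      = ∑ u ∈ Finset.range n, a u * ((cR u : ℝ) * ((N : ℝ))⁻¹) := by
    rw [hsplitR, ENNReal.toReal_sum]
    · refine Finset.sum_congr rfl fun u _ => ?_
      rw [hdistR u, ENNReal.toReal_mul, ENNReal.toReal_mul, ENNReal.toReal_inv,
        ENNReal.toReal_natCast, ENNReal.toReal_natCast]
    · intro u _
      rw [hdistR u]
      exact ENNReal.mul_ne_top (measure_ne_top μ _)
        (ENNReal.mul_ne_top (ENNReal.natCast_ne_top _)
          (ENNReal.inv_ne_top.2 (by exact_mod_cast hNpos.ne')))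
  have htU : (μ {ω | (Wf ω, U ω) ∈ E}).toReal
      = ∑ u ∈ Finset.range n, a u * ((n : ℝ))⁻¹ := by
    rw [hsplitU, ENNReal.toReal_sum]
    · refine Finset.sum_congr rfl fun u hu => ?_
      rw [hdistU u (Finset.mem_range.1 hu), ENNReal.toReal_mul, ENNReal.toReal_inv,
        ENNReal.toReal_natCast]
    · intro u hu
      rw [hdistU u (Finset.mem_range.1 hu)]
      exact ENNReal.mul_ne_top (measure_ne_top μ _)
        (ENNReal.inv_ne_top.2 (by exact_mod_cast hnpos.ne'))
  rw [htR, htU, ← Finset.sum_sub_distrib]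
  -- per-term bound
  have hterm : ∀ u ∈ Finset.range n,
      |a u * ((cR u : ℝ) * ((N : ℝ))⁻¹) - a u * ((n : ℝ))⁻¹| ≤ ((N : ℝ))⁻¹ := by
    intro u hu
    have hu' : u < n := Finset.mem_range.1 hu
    set c : ℕ := N / n with hc
    have hlow : (c : ℝ) ≤ (cR u : ℝ) := by
      exact_mod_cast count_lower N n u hnpos hu'
    have hup : (cR u : ℝ) ≤ (c : ℝ) + 1 := by
      have := count_upper N n u
      exact_mod_cast this
    have hnR : (0 : ℝ) < (n : ℝ) := by exact_mod_cast hnpos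
    have hNR : (0 : ℝ) < (N : ℝ) := by exact_mod_cast hNpos
    have hq1 : (c : ℝ) ≤ (N : ℝ) * ((n : ℝ))⁻¹ := by
      have := Nat.cast_div_le (m := N) (n := n) (α := ℝ)
      rw [div_eq_mul_inv] at this
      exact this
    have hNlt : N < n * (c + 1) := by
      have h1 := Nat.div_add_mod N n
      have h2 : N % n < n := Nat.mod_lt _ hnpos
      calc N = n * c + N % n := h1.symm
        _ < n * c + n := by omega
        _ = n * (c + 1) := by ring
    have hq2 : (N : ℝ) * ((n : ℝ))⁻¹ ≤ (c : ℝ) + 1 := by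
      have h' : (N : ℝ) ≤ (n : ℝ) * ((c : ℝ) + 1) := by
        have : (N : ℝ) < (n : ℝ) * ((c : ℝ) + 1) := by exact_mod_cast hNlt
        linarith
      have h2 := mul_le_mul_of_nonneg_right h' (inv_nonneg.2 hnR.le)
      calc (N : ℝ) * ((n : ℝ))⁻¹ ≤ ((n : ℝ) * ((c : ℝ) + 1)) * ((n : ℝ))⁻¹ := h2
        _ = (c : ℝ) + 1 := by field_simp
    have hdiff : a u * ((cR u : ℝ) * ((N : ℝ))⁻¹) - a u * ((n : ℝ))⁻¹
        = a u * (((cR u : ℝ) - (N : ℝ) * ((n : ℝ))⁻¹) * ((N : ℝ))⁻¹) := by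
      field_simp
    rw [hdiff, abs_mul, abs_mul, abs_of_nonneg (ha0 u), abs_of_nonneg (inv_nonneg.2 hNR.le)]
    have habs : |(cR u : ℝ) - (N : ℝ) * ((n : ℝ))⁻¹| ≤ 1 :=
      abs_le.2 ⟨by linarith, by linarith⟩
    calc a u * (|(cR u : ℝ) - (N : ℝ) * ((n : ℝ))⁻¹| * ((N : ℝ))⁻¹)
        ≤ 1 * (1 * ((N : ℝ))⁻¹) := by
          apply mul_le_mul (ha1 u) _ (by positivity) (by norm_num)
          apply mul_le_mul_of_nonneg_right habs (inv_nonneg.2 hNR.le)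
      _ = ((N : ℝ))⁻¹ := by ring
  calc |∑ u ∈ Finset.range n, (a u * ((cR u : ℝ) * ((N : ℝ))⁻¹) - a u * ((n : ℝ))⁻¹)|
      ≤ ∑ u ∈ Finset.range n, |a u * ((cR u : ℝ) * ((N : ℝ))⁻¹) - a u * ((n : ℝ))⁻¹| :=
        Finset.abs_sum_le_sum_abs _ _
    _ ≤ ∑ u ∈ Finset.range n, ((N : ℝ))⁻¹ := Finset.sum_le_sum hterm
    _ = (n : ℝ) * ((N : ℝ))⁻¹ := by
        rw [Finset.sum_const, Finset.card_range, nsmul_eq_mul]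
    _ ≤ (k : ℝ) ^ (-(k : ℝ) / 8) := by
        have := final_bound k ℓ hk hle
        rw [div_eq_mul_inv] at this
        exact this
end

section
/- Let α be a linearly ordered type, let y_1, ..., y_n be n distinct elements of α, let σ be a uniformly random permutation of {1,...,n}, and let X_i = y_{σ(i)} for each i. Fix 1 ≤ k ≤ n, and let Π be the unique permutation of {1,...,k} that sorts (X_1,...,X_k), i.e., X_{Π(1)} < X_{Π(2)} < ⋯ < X_{Π(k)}. Then Π is uniformly distributed on the symmetric group on {1,...,k} and is independent of the tuple (X_{k+1}, ..., X_n). -/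
open Nat

lemma sort_eq_of_monotone' {k : ℕ} {α : Type*} [LinearOrder α] {f : Fin k → α}
    (hf : Function.Injective f) (σ : Equiv.Perm (Fin k)) (h : Monotone (f ∘ σ)) :
    Tuple.sort f = σ := by
  symm
  rw [Tuple.eq_sort_iff]
  refine ⟨h, fun i j hij hfij => ?_⟩
  exact absurd (σ.injective (hf hfij)) hij.ne

lemma sort_comp_perm {k : ℕ} {α : Type*} [LinearOrder α] {f : Fin k → α}
    (hf : Function.Injective f) (τ : Equiv.Perm (Fin k)) :
    Tuple.sort (f ∘ τ) = τ⁻¹ * Tuple.sort f := by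
  apply sort_eq_of_monotone' (hf.comp τ.injective)
  have : (f ∘ τ) ∘ ⇑(τ⁻¹ * Tuple.sort f) = f ∘ Tuple.sort f := by
    funext i; simp [Equiv.Perm.mul_apply]
  rw [this]
  exact Tuple.monotone_sort f

def lowEquiv {n k : ℕ} (hkn : k ≤ n) : Fin k ≃ {x : Fin n // x.val < k} where
  toFun i := ⟨Fin.castLE hkn i, i.isLt⟩
  invFun x := ⟨x.1.1, x.2⟩
  left_inv i := rfl
  right_inv x := rfl

def extP {n k : ℕ} (hkn : k ≤ n) (τ : Equiv.Perm (Fin k)) : Equiv.Perm (Fin n) :=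
  τ.extendDomain (lowEquiv hkn)

lemma extP_castLE {n k : ℕ} (hkn : k ≤ n) (τ : Equiv.Perm (Fin k)) (i : Fin k) :
    extP hkn τ (Fin.castLE hkn i) = Fin.castLE hkn (τ i) :=
  Equiv.Perm.extendDomain_apply_image τ (lowEquiv hkn) i

lemma extP_high {n k : ℕ} (hkn : k ≤ n) (τ : Equiv.Perm (Fin k)) (j : Fin n)
    (h : ¬ j.val < k) : extP hkn τ j = j :=
  Equiv.Perm.extendDomain_apply_not_subtype τ (lowEquiv hkn) h

lemma extP_mul_inv {n k : ℕ} (hkn : k ≤ n) (τ : Equiv.Perm (Fin k)) :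
    extP hkn τ * extP hkn τ⁻¹ = 1 := by
  rw [extP, extP, Equiv.Perm.extendDomain_mul, mul_inv_cancel]
  exact Equiv.Perm.extendDomain_one _

lemma sort_mul_extP {n k : ℕ} {α : Type*} [LinearOrder α] (hkn : k ≤ n)
    (y : Fin n → α) (hy : Function.Injective y)
    (σ : Equiv.Perm (Fin n)) (τ : Equiv.Perm (Fin k)) :
    Tuple.sort (fun i : Fin k => y ((σ * extP hkn τ) (Fin.castLE hkn i)))
      = τ⁻¹ * Tuple.sort (fun i : Fin k => y (σ (Fin.castLE hkn i))) := by
  have h1 : (fun i : Fin k => y ((σ * extP hkn τ) (Fin.castLE hkn i)))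
      = (fun i : Fin k => y (σ (Fin.castLE hkn i))) ∘ τ := by
    funext i
    simp [Equiv.Perm.mul_apply, extP_castLE]
  rw [h1]
  exact sort_comp_perm (hy.comp (σ.injective.comp (Fin.castLE_injective hkn))) τ

lemma mul_extP_cancel {n k : ℕ} (hkn : k ≤ n) (σ : Equiv.Perm (Fin n))
    (τ : Equiv.Perm (Fin k)) : (σ * extP hkn τ) * extP hkn τ⁻¹ = σ := by
  rw [mul_assoc, extP_mul_inv, mul_one]

lemma fiber_card {n k : ℕ} {α : Type*} [LinearOrder α] (hkn : k ≤ n)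
    (y : Fin n → α) (hy : Function.Injective y)
    (P : Equiv.Perm (Fin n) → Prop) [DecidablePred P]
    (hP : ∀ σ τ, P (σ * extP hkn τ) ↔ P σ) (π₁ π₂ : Equiv.Perm (Fin k)) :
    (Finset.univ.filter (fun σ : Equiv.Perm (Fin n) =>
        P σ ∧ Tuple.sort (fun i : Fin k => y (σ (Fin.castLE hkn i))) = π₁)).card
      = (Finset.univ.filter (fun σ : Equiv.Perm (Fin n) =>
        P σ ∧ Tuple.sort (fun i : Fin k => y (σ (Fin.castLE hkn i))) = π₂)).card := by
  apply Finset.card_bij' (fun σ _ => σ * extP hkn (π₁ * π₂⁻¹))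
    (fun σ _ => σ * extP hkn (π₂ * π₁⁻¹))
  · intro σ hσ
    simp only [Finset.mem_filter, Finset.mem_univ, true_and] at hσ ⊢
    rw [sort_mul_extP hkn y hy, hσ.2, hP]
    refine ⟨hσ.1, ?_⟩
    group
  · intro σ hσ
    simp only [Finset.mem_filter, Finset.mem_univ, true_and] at hσ ⊢
    rw [sort_mul_extP hkn y hy, hσ.2, hP]
    refine ⟨hσ.1, ?_⟩
    group
  · intro σ _
    have : π₂ * π₁⁻¹ = (π₁ * π₂⁻¹)⁻¹ := by group
    rw [this, mul_extP_cancel]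
  · intro σ _
    have : π₁ * π₂⁻¹ = (π₂ * π₁⁻¹)⁻¹ := by group
    rw [this, mul_extP_cancel]

lemma key_count {n k : ℕ} {α : Type*} [LinearOrder α] (hkn : k ≤ n)
    (y : Fin n → α) (hy : Function.Injective y)
    (P : Equiv.Perm (Fin n) → Prop) [DecidablePred P]
    (hP : ∀ σ τ, P (σ * extP hkn τ) ↔ P σ) (π : Equiv.Perm (Fin k)) :
    k ! * (Finset.univ.filter (fun σ : Equiv.Perm (Fin n) =>
        Tuple.sort (fun i : Fin k => y (σ (Fin.castLE hkn i))) = π ∧ P σ)).card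
      = (Finset.univ.filter P).card := by
  have hsum := Finset.card_eq_sum_card_fiberwise (s := Finset.univ.filter P)
    (t := Finset.univ)
    (f := fun σ : Equiv.Perm (Fin n) =>
      Tuple.sort (fun i : Fin k => y (σ (Fin.castLE hkn i))))
    (fun _ _ => Finset.mem_univ _)
  rw [hsum]
  have h2 : ∀ π' ∈ (Finset.univ : Finset (Equiv.Perm (Fin k))),
      ((Finset.univ.filter P).filter (fun σ : Equiv.Perm (Fin n) =>
        Tuple.sort (fun i : Fin k => y (σ (Fin.castLE hkn i))) = π')).card
      = (Finset.univ.filter (fun σ : Equiv.Perm (Fin n) =>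
        Tuple.sort (fun i : Fin k => y (σ (Fin.castLE hkn i))) = π ∧ P σ)).card := by
    intro π' _
    rw [Finset.filter_filter]
    rw [fiber_card hkn y hy P hP π' π]
    congr 1
    ext σ
    simp [and_comm]
  rw [Finset.sum_congr rfl h2, Finset.sum_const, Finset.card_univ, Fintype.card_perm,
    Fintype.card_fin, smul_eq_mul]

/-- When a tuple of `n` distinct elements is uniformly randomly permuted, the permutation
`Π` sorting the first `k` entries is uniform on the symmetric group of `{1,…,k}` and
independent of the remaining entries `(X_{k+1}, …, X_n)`.  Uniformity and independence are
expressed by counting: `Pr[Π = π] = 1/k!` and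
`Pr[Π = π ∧ tail = v] = (1/k!) · Pr[tail = v]` for all `π` and `v`. -/
theorem sort_perm_uniform_indep_tail
    {α : Type*} [LinearOrder α] (n k : ℕ) (hk : 1 ≤ k) (hkn : k ≤ n)
    (y : Fin n → α) (hy : Function.Injective y) :
    (∀ π : Equiv.Perm (Fin k),
      k ! * (Finset.univ.filter (fun σ : Equiv.Perm (Fin n) =>
          Tuple.sort (fun i : Fin k => y (σ (Fin.castLE hkn i))) = π)).card = n !)
    ∧ (∀ (π : Equiv.Perm (Fin k)) (v : Fin (n - k) → α),
      k ! * (Finset.univ.filter (fun σ : Equiv.Perm (Fin n) =>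
          Tuple.sort (fun i : Fin k => y (σ (Fin.castLE hkn i))) = π ∧
          (fun i : Fin (n - k) => y (σ ⟨k + (i : ℕ), by omega⟩)) = v)).card
        = (Finset.univ.filter (fun σ : Equiv.Perm (Fin n) =>
            (fun i : Fin (n - k) => y (σ ⟨k + (i : ℕ), by omega⟩)) = v)).card) := by
  constructor
  · intro π
    have h := key_count hkn y hy (fun _ => True) (fun _ _ => Iff.rfl) π
    simp only [and_true, Finset.filter_true, Finset.card_univ, Fintype.card_perm,
      Fintype.card_fin] at h
    exact h
  · intro π v
    have hP : ∀ (σ : Equiv.Perm (Fin n)) (τ : Equiv.Perm (Fin k)),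
        ((fun i : Fin (n - k) => y ((σ * extP hkn τ) ⟨k + (i : ℕ), by omega⟩)) = v)
        ↔ ((fun i : Fin (n - k) => y (σ ⟨k + (i : ℕ), by omega⟩)) = v) := by
      intro σ τ
      have : (fun i : Fin (n - k) => y ((σ * extP hkn τ) ⟨k + (i : ℕ), by omega⟩))
          = (fun i : Fin (n - k) => y (σ ⟨k + (i : ℕ), by omega⟩)) := by
        funext i
        rw [Equiv.Perm.mul_apply, extP_high]
        simp
      rw [this]
    exact key_count hkn y hy
      (fun σ => (fun i : Fin (n - k) => y (σ ⟨k + (i : ℕ), by omega⟩)) = v) hP π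
end

section
/- Fix integers n, k with 1 ≤ k ≤ n, let d = 5 log₂ n, and let t be a nonnegative integer with 2^{dt} ≤ k!. Let 𝒟 be any distribution over (({0,1}^d))^n, let D ~ 𝒟, let X = (X_1,...,X_n) be a uniformly random permutation of the entries of D (the permutation chosen independently of D), and let C be the output of Encrypermute_k on input X. Then D and C are independent random variables. -/
open MeasureTheory ProbabilityTheory Nat

instance (k : ℕ) : NeZero (k !) := ⟨(Nat.factorial_pos k).ne'⟩

instance (n : ℕ) : MeasurableSpace (Equiv.Perm (Fin n)) := ⊤

instance (m : ℕ) : MeasurableSpace (ZMod m) := ⊤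

namespace EncAux

open Equiv Function

/-- For injective `y`, sorting a permuted tuple. -/
lemma sort_comp {α : Type*} [LinearOrder α] {k : ℕ} {y : Fin k → α}
    (hy : Function.Injective y) (τ : Equiv.Perm (Fin k)) :
    Tuple.sort (y ∘ τ) = τ⁻¹ * Tuple.sort y := by
  have h1 : Monotone ((y ∘ τ) ∘ (τ⁻¹ * Tuple.sort y : Equiv.Perm (Fin k))) := by
    have h2 : ((y ∘ τ) ∘ (τ⁻¹ * Tuple.sort y : Equiv.Perm (Fin k))) = y ∘ Tuple.sort y := by
      funext i
      simp [Equiv.Perm.mul_apply]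
    rw [h2]
    exact Tuple.monotone_sort y
  have h3 := Tuple.comp_sort_eq_comp_iff_monotone.mpr h1
  have hyτ : Function.Injective (y ∘ τ) := hy.comp τ.injective
  refine Equiv.ext fun i => ?_
  exact (hyτ (congrFun h3 i)).symm

def eqvLt {k n : ℕ} (hkn : k ≤ n) : Fin k ≃ {i : Fin n // (i : ℕ) < k} where
  toFun i := ⟨Fin.castLE hkn i, i.isLt⟩
  invFun j := ⟨(j : Fin n), j.2⟩
  left_inv i := rfl
  right_inv j := rfl

def extP {k n : ℕ} (hkn : k ≤ n) : Equiv.Perm (Fin k) →* Equiv.Perm (Fin n) :=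
  Equiv.Perm.extendDomainHom (eqvLt hkn)

lemma extP_castLE {k n : ℕ} (hkn : k ≤ n) (τ : Equiv.Perm (Fin k)) (i : Fin k) :
    extP hkn τ (Fin.castLE hkn i) = Fin.castLE hkn (τ i) :=
  Equiv.Perm.extendDomain_apply_image τ (eqvLt hkn) i

lemma extP_high {k n : ℕ} (hkn : k ≤ n) (τ : Equiv.Perm (Fin k)) {j : Fin n}
    (hj : ¬ ((j : ℕ) < k)) : extP hkn τ j = j :=
  Equiv.Perm.extendDomain_apply_not_subtype τ (eqvLt hkn) hj

lemma count_perm {α : Type*} [LinearOrder α] {n k : ℕ} (hkn : k ≤ n)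
    (e : Equiv.Perm (Fin k) ≃ ZMod (k !))
    (m : Equiv.Perm (Fin n) → ZMod (k !))
    (hm : ∀ s τ, m (s * extP hkn τ) = m s)
    (x : Fin n → α) (hx : Function.Injective x) (c : ZMod (k !)) :
    (Finset.univ.filter (fun s : Equiv.Perm (Fin n) =>
      m s + e (Tuple.sort (fun i : Fin k => x (s (Fin.castLE hkn i)))) = c)).card * k !
      = n ! := by
  classical
  haveI : NeZero (k !) := ⟨(Nat.factorial_pos k).ne'⟩
  set y : Equiv.Perm (Fin n) → Fin k → α := fun s i => x (s (Fin.castLE hkn i)) with hy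
  set F : Equiv.Perm (Fin n) → ZMod (k !) := fun s => m s + e (Tuple.sort (y s)) with hF
  have hyinj : ∀ s : Equiv.Perm (Fin n), Function.Injective (y s) := by
    intro s i j hij
    exact Fin.castLE_injective hkn (s.injective (hx hij))
  set τf : ZMod (k !) → Equiv.Perm (Fin n) → Equiv.Perm (Fin k) := fun δ s =>
    Tuple.sort (y s) * (e.symm (e (Tuple.sort (y s)) + δ))⁻¹ with hτf
  set Φ : ZMod (k !) → Equiv.Perm (Fin n) → Equiv.Perm (Fin n) := fun δ s =>
    s * extP hkn (τf δ s) with hΦ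
  have step1 : ∀ δ s, y (Φ δ s) = y s ∘ (τf δ s) := by
    intro δ s
    funext i
    simp only [hy, hΦ, Equiv.Perm.mul_apply, Function.comp_apply]
    rw [extP_castLE]
  have sortΦ : ∀ δ s, Tuple.sort (y (Φ δ s)) = e.symm (e (Tuple.sort (y s)) + δ) := by
    intro δ s
    rw [step1, sort_comp (hyinj s)]
    simp only [hτf, mul_inv_rev, inv_inv]
    rw [mul_assoc]
    simp
  have step2 : ∀ δ s, e (Tuple.sort (y (Φ δ s))) = e (Tuple.sort (y s)) + δ := by
    intro δ s
    rw [sortΦ, Equiv.apply_symm_apply]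
  have step3 : ∀ δ s, F (Φ δ s) = F s + δ := by
    intro δ s
    simp only [hF]
    rw [show (Φ δ s) = s * extP hkn (τf δ s) from rfl] at *
    rw [hm s (τf δ s), step2 δ s, add_assoc]
  have step4 : ∀ δ s, Φ (-δ) (Φ δ s) = s := by
    intro δ s
    have hτ : τf (-δ) (Φ δ s) = (τf δ s)⁻¹ := by
      simp only [hτf]
      rw [sortΦ δ s, Equiv.apply_symm_apply, add_neg_cancel_right,
        Equiv.symm_apply_apply, mul_inv_rev, inv_inv]
    show (Φ δ s) * extP hkn (τf (-δ) (Φ δ s)) = s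
    rw [hτ, map_inv]
    show s * extP hkn (τf δ s) * (extP hkn (τf δ s))⁻¹ = s
    rw [mul_inv_cancel_right]
  have hle : ∀ c₁ c₂ : ZMod (k !),
      (Finset.univ.filter (fun s => F s = c₁)).card ≤
        (Finset.univ.filter (fun s => F s = c₂)).card := by
    intro c₁ c₂
    apply Finset.card_le_card_of_injOn (Φ (c₂ - c₁))
    · intro s hs
      simp only [Finset.mem_coe, Finset.mem_filter, Finset.mem_univ, true_and] at hs ⊢
      rw [step3, hs, add_sub_cancel]
    · intro s hs s' hs' h
      have := congrArg (Φ (-(c₂ - c₁))) h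
      rwa [step4, step4] at this
  have heq : ∀ c₂ : ZMod (k !),
      (Finset.univ.filter (fun s => F s = c₂)).card =
        (Finset.univ.filter (fun s => F s = c)).card :=
    fun c₂ => le_antisymm (hle c₂ c) (hle c c₂)
  have hpart : (Finset.univ : Finset (Equiv.Perm (Fin n))).card =
      ∑ c₂ : ZMod (k !), (Finset.univ.filter (fun s => F s = c₂)).card :=
    Finset.card_eq_sum_card_fiberwise (fun s _ => Finset.mem_univ (F s))
  have hcards : (Finset.univ : Finset (Equiv.Perm (Fin n))).card = n ! := by
    rw [Finset.card_univ, Fintype.card_perm, Fintype.card_fin]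
  have h : (Finset.univ.filter (fun s => F s = c)).card * k ! = n ! := by
    rw [mul_comm, ← hcards, hpart,
      Finset.sum_congr rfl (fun c₂ _ => heq c₂), Finset.sum_const, Finset.card_univ,
      ZMod.card, smul_eq_mul]
  exact h


def gfun {n k t d : ℕ} (hkn : k ≤ n) (hkt : k + t ≤ n) (lo : LinearOrder (Fin d → Bool))
    (e : Equiv.Perm (Fin k) ≃ ZMod (k !)) (ι : (Fin t → Fin d → Bool) → ZMod (k !))
    (x : Fin n → Fin d → Bool) (s : Equiv.Perm (Fin n)) (v : ZMod (k !)) : ZMod (k !) :=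
  if Function.Injective (fun i => x (s i)) then
    ι (fun i : Fin t => x (s ⟨k + (i : ℕ), by omega⟩)) +
      e (@Tuple.sort _ _ lo (fun i : Fin k => x (s (Fin.castLE hkn i))))
  else v

lemma helperA {β γ : Type*} [Fintype β] [Fintype γ] [DecidableEq γ] (F : β → γ) (c : γ) :
    ∑ s : β, ∑ _v : γ, (if F s = c then (1 : ENNReal) else 0)
      = ((Finset.univ.filter (fun s => F s = c)).card : ENNReal) *
          (Fintype.card γ : ENNReal) := by
  have h1 : ∀ s : β, ∑ _v : γ, (if F s = c then (1 : ENNReal) else 0)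
      = (if F s = c then (1 : ENNReal) else 0) * (Fintype.card γ : ENNReal) := by
    intro s
    rw [Finset.sum_const, Finset.card_univ, nsmul_eq_mul, mul_comm]
  rw [Finset.sum_congr rfl (fun s _ => h1 s), ← Finset.sum_mul]
  congr 1
  rw [Finset.sum_boole]

lemma count_total {n k t d : ℕ} (hkn : k ≤ n) (hkt : k + t ≤ n)
    (lo : LinearOrder (Fin d → Bool))
    (e : Equiv.Perm (Fin k) ≃ ZMod (k !)) (ι : (Fin t → Fin d → Bool) → ZMod (k !))
    (x : Fin n → Fin d → Bool) (c : ZMod (k !)) :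
    ∑ s : Equiv.Perm (Fin n), ∑ v : ZMod (k !),
      (if gfun hkn hkt lo e ι x s v = c then (1 : ENNReal) else 0) = (n ! : ENNReal) := by
  classical
  haveI : NeZero (k !) := ⟨(Nat.factorial_pos k).ne'⟩
  by_cases hx : Function.Injective x
  · have hcond : ∀ s : Equiv.Perm (Fin n), Function.Injective (fun i => x (s i)) :=
      fun s => hx.comp s.injective
    have hm : ∀ (s : Equiv.Perm (Fin n)) (τ : Equiv.Perm (Fin k)),
        (fun s : Equiv.Perm (Fin n) =>
          ι (fun i : Fin t => x (s ⟨k + (i : ℕ), by omega⟩))) (s * extP hkn τ)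
        = (fun s : Equiv.Perm (Fin n) =>
          ι (fun i : Fin t => x (s ⟨k + (i : ℕ), by omega⟩))) s := by
      intro s τ
      simp only
      congr 1
      funext i
      have hfix : extP hkn τ ⟨k + (i : ℕ), by omega⟩ = ⟨k + (i : ℕ), by omega⟩ :=
        extP_high hkn τ (Nat.not_lt.mpr (Nat.le_add_right k (i : ℕ)))
      rw [Equiv.Perm.mul_apply, hfix]
    have hcp := @count_perm (Fin d → Bool) lo n k hkn e
      (fun s : Equiv.Perm (Fin n) =>
        ι (fun i : Fin t => x (s ⟨k + (i : ℕ), by omega⟩))) hm x hx c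
    set F₀ : Equiv.Perm (Fin n) → ZMod (k !) := fun s =>
      ι (fun i : Fin t => x (s ⟨k + (i : ℕ), by omega⟩)) +
        e (@Tuple.sort _ _ lo (fun i : Fin k => x (s (Fin.castLE hkn i)))) with hF₀
    have hgeq : ∀ (s : Equiv.Perm (Fin n)) (v : ZMod (k !)),
        gfun hkn hkt lo e ι x s v = F₀ s := by
      intro s v
      rw [hF₀]
      exact if_pos (hcond s)
    have h2 : ∑ s : Equiv.Perm (Fin n), ∑ v : ZMod (k !),
        (if gfun hkn hkt lo e ι x s v = c then (1 : ENNReal) else 0)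
        = ∑ s : Equiv.Perm (Fin n), ∑ _v : ZMod (k !),
            (if F₀ s = c then (1 : ENNReal) else 0) :=
      Finset.sum_congr rfl fun s _ => Finset.sum_congr rfl fun v _ => by rw [hgeq]
    rw [h2, helperA, ZMod.card, ← Nat.cast_mul]
    norm_cast
  · have hcond : ∀ s : Equiv.Perm (Fin n), ¬ Function.Injective (fun i => x (s i)) := by
      intro s h
      apply hx
      have hxe : x = (fun i => x (s i)) ∘ ⇑(s.symm) := by
        funext j; simp
      rw [hxe]
      exact h.comp s.symm.injective
    have hgeq : ∀ (s : Equiv.Perm (Fin n)) (v : ZMod (k !)),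
        gfun hkn hkt lo e ι x s v = v := fun s v => if_neg (hcond s)
    simp only [hgeq]
    simp [Finset.sum_ite_eq', Fintype.card_perm, Fintype.card_fin]


lemma meas_preimage_sum {Ω β : Type*} [MeasurableSpace Ω] [MeasurableSpace β]
    [MeasurableSingletonClass β] (μ : Measure Ω) {T : Ω → β} (hT : Measurable T)
    (S : Finset β) :
    μ (T ⁻¹' ↑S) = ∑ p ∈ S, μ (T ⁻¹' {p}) := by
  rw [← measure_biUnion_finset]
  · congr 1
    ext ω
    simp only [Set.mem_preimage, Finset.mem_coe, Set.mem_iUnion, Set.mem_singleton_iff]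
    exact ⟨fun h => ⟨T ω, h, rfl⟩, fun ⟨p, hp, hpe⟩ => hpe ▸ hp⟩
  · intro p _ q _ hpq
    refine Set.disjoint_left.mpr fun ω h1 h2 => hpq ?_
    simp only [Set.mem_preimage, Set.mem_singleton_iff] at h1 h2
    exact h1.symm.trans h2
  · exact fun p _ => hT (measurableSet_singleton p)

end EncAux

/-- The output of `Encrypermute_k` is independent of the data.  Let `D` be a sample from an
arbitrary distribution over `({0,1}^d)^n` with `d = 5 log₂ n`, let `X_i = D_{σ(i)}` for a
uniformly random permutation `σ` independent of `D`, and let `C` be the output of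
`Encrypermute_k` on `X` (using a fixed linear order `lo` on `{0,1}^d`, a fixed bijection `e`
between permutations of `{1,…,k}` and `{0,…,k!−1}`, a fixed injection `ι` of
`({0,1}^d)^t` into `{0,…,k!−1}`, and a fresh uniform value `u` when `X` is not injective).
Then `D` and `C` are independent. -/
theorem encrypermute_indep
    {Ω : Type*} [MeasurableSpace Ω] (μ : Measure Ω) [IsProbabilityMeasure μ]
    (n k t d : ℕ) (hk1 : 1 ≤ k) (hkn : k ≤ n) (hkt : k + t ≤ n)
    (hd : d = 5 * Nat.log 2 n) (h2dt : 2 ^ (d * t) ≤ k !)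
    (lo : LinearOrder (Fin d → Bool))
    (e : Equiv.Perm (Fin k) ≃ ZMod (k !))
    (ι : (Fin t → Fin d → Bool) → ZMod (k !)) (hι : Function.Injective ι)
    (D : Ω → Fin n → Fin d → Bool) (σ : Ω → Equiv.Perm (Fin n)) (u : Ω → ZMod (k !))
    (hD : Measurable D) (hσ : Measurable σ) (hu : Measurable u)
    (hσunif : ∀ s : Equiv.Perm (Fin n), μ {ω | σ ω = s} = ((n ! : ENNReal))⁻¹)
    (huunif : ∀ c : ZMod (k !), μ {ω | u ω = c} = ((k ! : ENNReal))⁻¹)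
    (hindσ : IndepFun D σ μ)
    (hindu : IndepFun (fun ω => (D ω, σ ω)) u μ) :
    IndepFun D
      (fun ω =>
        if Function.Injective (fun i => D ω (σ ω i)) then
          ι (fun i : Fin t => D ω (σ ω ⟨k + (i : ℕ), by omega⟩)) +
            e (@Tuple.sort _ _ lo (fun i : Fin k => D ω (σ ω (Fin.castLE hkn i))))
        else u ω) μ := by
  classical
  haveI : MeasurableSingletonClass (Equiv.Perm (Fin n)) :=
    ⟨fun _ => MeasurableSpace.measurableSet_top⟩
  haveI : MeasurableSingletonClass (ZMod (k !)) :=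
    ⟨fun _ => MeasurableSpace.measurableSet_top⟩
  set T : Ω → (Fin n → Fin d → Bool) × Equiv.Perm (Fin n) × ZMod (k !) :=
    fun ω => (D ω, σ ω, u ω) with hT
  have hTm : Measurable T := hD.prodMk (hσ.prodMk hu)
  set C : Ω → ZMod (k !) := fun ω => EncAux.gfun hkn hkt lo e ι (D ω) (σ ω) (u ω) with hC
  have hCm : Measurable C := by
    have h := (measurable_of_countable
      (fun p : (Fin n → Fin d → Bool) × Equiv.Perm (Fin n) × ZMod (k !) =>
        EncAux.gfun hkn hkt lo e ι p.1 p.2.1 p.2.2)).comp hTm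
    exact h
  show IndepFun D C μ
  rw [ProbabilityTheory.indepFun_iff_measure_inter_preimage_eq_mul]
  intro A B hA hB
  have hn0 : ((n ! : ENNReal)) ≠ 0 := by
    simp [Nat.factorial_pos n |>.ne']
  have hntop : ((n ! : ENNReal)) ≠ ⊤ := ENNReal.natCast_ne_top _
  -- key: for any measurable A and single value c
  have key : ∀ (A' : Set (Fin n → Fin d → Bool)) (c : ZMod (k !)),
      μ (D ⁻¹' A' ∩ C ⁻¹' {c}) = μ (D ⁻¹' A') * ((k ! : ENNReal))⁻¹ := by
    intro A' c
    set SF : Finset ((Fin n → Fin d → Bool) × Equiv.Perm (Fin n) × ZMod (k !)) :=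
      Finset.univ.filter
        (fun p => p.1 ∈ A' ∧ EncAux.gfun hkn hkt lo e ι p.1 p.2.1 p.2.2 = c) with hSF
    have hset : D ⁻¹' A' ∩ C ⁻¹' {c} = T ⁻¹' ↑SF := by
      ext ω
      simp [hSF, hT, hC]
    rw [hset, EncAux.meas_preimage_sum μ hTm SF]
    have hfib : ∀ p : (Fin n → Fin d → Bool) × Equiv.Perm (Fin n) × ZMod (k !),
        μ (T ⁻¹' {p}) = μ (D ⁻¹' {p.1}) * ((n ! : ENNReal))⁻¹ * ((k ! : ENNReal))⁻¹ := by
      rintro ⟨x, s, v⟩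
      have h1 : T ⁻¹' {(x, s, v)} =
          ((fun ω => (D ω, σ ω)) ⁻¹' {(x, s)}) ∩ (u ⁻¹' {v}) := by
        ext ω
        simp [hT, Prod.ext_iff, and_assoc]
      have h2 : ((fun ω => (D ω, σ ω)) ⁻¹' {(x, s)}) = D ⁻¹' {x} ∩ σ ⁻¹' {s} := by
        ext ω
        simp [Prod.ext_iff]
      rw [h1,
        (ProbabilityTheory.indepFun_iff_measure_inter_preimage_eq_mul.mp hindu)
          {(x, s)} {v} (measurableSet_singleton _) (measurableSet_singleton _),
        h2,
        (ProbabilityTheory.indepFun_iff_measure_inter_preimage_eq_mul.mp hindσ)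
          {x} {s} (measurableSet_singleton _) (measurableSet_singleton _)]
      have hu' : μ (u ⁻¹' {v}) = ((k ! : ENNReal))⁻¹ := huunif v
      have hσ' : μ (σ ⁻¹' {s}) = ((n ! : ENNReal))⁻¹ := hσunif s
      rw [hu', hσ']
    calc ∑ p ∈ SF, μ (T ⁻¹' {p})
        = ∑ p ∈ SF, μ (D ⁻¹' {p.1}) * ((n ! : ENNReal))⁻¹ * ((k ! : ENNReal))⁻¹ :=
          Finset.sum_congr rfl fun p _ => hfib p
      _ = ∑ p : (Fin n → Fin d → Bool) × Equiv.Perm (Fin n) × ZMod (k !),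
            (if p.1 ∈ A' ∧ EncAux.gfun hkn hkt lo e ι p.1 p.2.1 p.2.2 = c then
              μ (D ⁻¹' {p.1}) * ((n ! : ENNReal))⁻¹ * ((k ! : ENNReal))⁻¹ else 0) := by
          rw [hSF, Finset.sum_filter]
      _ = ∑ x : Fin n → Fin d → Bool, ∑ s : Equiv.Perm (Fin n), ∑ v : ZMod (k !),
            (if x ∈ A' ∧ EncAux.gfun hkn hkt lo e ι x s v = c then
              μ (D ⁻¹' {x}) * ((n ! : ENNReal))⁻¹ * ((k ! : ENNReal))⁻¹ else 0) := by
          rw [Fintype.sum_prod_type]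
          exact Finset.sum_congr rfl fun x _ => Fintype.sum_prod_type _
      _ = ∑ x : Fin n → Fin d → Bool,
            (if x ∈ A' then μ (D ⁻¹' {x}) * ((k ! : ENNReal))⁻¹ else 0) := by
          refine Finset.sum_congr rfl fun x _ => ?_
          by_cases hxA : x ∈ A'
          · simp only [hxA, true_and, if_pos]
            have hsplit : ∀ (s : Equiv.Perm (Fin n)) (v : ZMod (k !)),
                (if EncAux.gfun hkn hkt lo e ι x s v = c then
                  μ (D ⁻¹' {x}) * ((n ! : ENNReal))⁻¹ * ((k ! : ENNReal))⁻¹ else 0)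
                = μ (D ⁻¹' {x}) * ((n ! : ENNReal))⁻¹ * ((k ! : ENNReal))⁻¹ *
                    (if EncAux.gfun hkn hkt lo e ι x s v = c then (1 : ENNReal) else 0) := by
              intro s v
              by_cases h : EncAux.gfun hkn hkt lo e ι x s v = c <;> simp [h]
            rw [Finset.sum_congr rfl fun s _ => Finset.sum_congr rfl fun v _ => hsplit s v]
            simp only [← Finset.mul_sum]
            rw [EncAux.count_total hkn hkt lo e ι x c]
            rw [show μ (D ⁻¹' {x}) * ((n ! : ENNReal))⁻¹ * ((k ! : ENNReal))⁻¹ * (n ! : ENNReal)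
                = μ (D ⁻¹' {x}) * ((k ! : ENNReal))⁻¹ * (((n ! : ENNReal))⁻¹ * (n ! : ENNReal))
              from by ring]
            rw [ENNReal.inv_mul_cancel hn0 hntop, mul_one]
          · simp [hxA]
      _ = (∑ x ∈ Finset.univ.filter (· ∈ A'), μ (D ⁻¹' {x})) * ((k ! : ENNReal))⁻¹ := by
          rw [← Finset.sum_filter, Finset.sum_mul]
      _ = μ (D ⁻¹' A') * ((k ! : ENNReal))⁻¹ := by
          congr 1
          rw [show A' = ↑(Finset.univ.filter (· ∈ A')) from by simp,
            EncAux.meas_preimage_sum μ hD]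
          simp
  -- assemble over B
  set BF : Finset (ZMod (k !)) := (Set.toFinite B).toFinset with hBF
  have hcoe : ↑BF = B := Set.Finite.coe_toFinset _
  have hgen : ∀ A' : Set (Fin n → Fin d → Bool), MeasurableSet A' →
      μ (D ⁻¹' A' ∩ C ⁻¹' B) = BF.card * (μ (D ⁻¹' A') * ((k ! : ENNReal))⁻¹) := by
    intro A' hA'
    have hdec : D ⁻¹' A' ∩ C ⁻¹' B = ⋃ c ∈ BF, (D ⁻¹' A' ∩ C ⁻¹' {c}) := by
      ext ω
      simp only [Set.mem_inter_iff, Set.mem_preimage, Set.mem_iUnion,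
        Set.Finite.mem_toFinset, Set.mem_singleton_iff, hBF]
      constructor
      · rintro ⟨h1, h2⟩
        exact ⟨C ω, h2, h1, rfl⟩
      · rintro ⟨cc, hcc, h1, h2⟩
        exact ⟨h1, h2 ▸ hcc⟩
    rw [hdec, measure_biUnion_finset]
    · rw [Finset.sum_congr rfl fun cc _ => key A' cc, Finset.sum_const, nsmul_eq_mul]
    · intro p _ q _ hpq
      refine Set.disjoint_left.mpr fun ω h1 h2 => hpq ?_
      have e1 : C ω = p := h1.2
      have e2 : C ω = q := h2.2
      exact e1.symm.trans e2
    · exact fun cc _ => (hD hA').inter (hCm (measurableSet_singleton cc))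
  have h1 := hgen A hA
  have h2 := hgen Set.univ MeasurableSet.univ
  rw [Set.preimage_univ, Set.univ_inter, measure_univ] at h2
  rw [h1, h2]
  ring
end
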